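/- arXiv:math/0609786 — 4 statements merged into one kernel-verified Lean document; each statement's English description precedes it below -/
import Mathlib

section
/- Let S be a submonoid of a polycyclic-by-finite group G = SS⁻¹ and assume S satisfies the ascending chain condition on right ideals. Let H = Δ⁺(G), the maximal finite normal subgroup of G, and let ∼ be the congruence on S defined by s ∼ t if and only if sH = tH. Then the map Spec(S) → Spec(S/∼) defined by P ↦ P/∼ is a bijection. -/
open scoped Pointwise

universe u v

section GroupMonoidDefs

variable {G : Type u} [Group G]

/-- `G` is the group of (two-sided) quotients of the submonoid `S`. -/
def IsGroupOfQuotients (S : Submonoid G) : Prop :=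
  ∀ g : G, ∃ s ∈ S, ∃ t ∈ S, g = s * t⁻¹

/-- the set of quotients `s * t⁻¹` of elements of a submonoid. -/
def quotSet (S : Submonoid G) : Set G :=
  {g : G | ∃ s ∈ S, ∃ t ∈ S, g = s * t⁻¹}

/-- a subset of a group closed under conjugation by all group elements. -/
def IsGInvariant (X : Set G) : Prop :=
  ∀ g : G, ∀ x ∈ X, g * x * g⁻¹ ∈ X

/-- the conjugacy class of an element. -/
def conjClassSet (x : G) : Set G :=
  {y : G | ∃ g : G, y = g * x * g⁻¹}

/-- right ideal of a submonoid, given as a subset of the ambient group. -/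
def IsRightIdealOfSubmonoid (S : Submonoid G) (I : Set G) : Prop :=
  I.Nonempty ∧ I ⊆ (S : Set G) ∧ ∀ x ∈ I, ∀ s ∈ S, x * s ∈ I

/-- ascending chain condition on right ideals of a submonoid. -/
def ACCRightIdeals (S : Submonoid G) : Prop :=
  ∀ f : ℕ → Set G, (∀ n, IsRightIdealOfSubmonoid S (f n)) →
    (∀ n, f n ⊆ f (n + 1)) → ∃ N, ∀ n, N ≤ n → f n = f N

/-- (two-sided) ideal of a submonoid. -/
def IsIdealOfSubmonoid (S : Submonoid G) (I : Set G) : Prop :=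
  I.Nonempty ∧ I ⊆ (S : Set G) ∧ ∀ s ∈ S, ∀ x ∈ I, ∀ t ∈ S, s * x * t ∈ I

/-- prime ideal of a submonoid. -/
def IsPrimeIdealOfSubmonoid (S : Submonoid G) (P : Set G) : Prop :=
  IsIdealOfSubmonoid S P ∧ P ≠ (S : Set G) ∧
    ∀ I J : Set G, IsIdealOfSubmonoid S I → IsIdealOfSubmonoid S J →
      I * J ⊆ P → I ⊆ P ∨ J ⊆ P

/-- minimal prime ideal of a submonoid. -/
def IsMinimalPrimeOfSubmonoid (S : Submonoid G) (P : Set G) : Prop :=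
  IsPrimeIdealOfSubmonoid S P ∧
    ∀ Q : Set G, IsPrimeIdealOfSubmonoid S Q → Q ⊆ P → Q = P

/-- prime ideal of a submonoid which is minimal over the subset `I`. -/
def IsMinimalPrimeOver (S : Submonoid G) (I Q : Set G) : Prop :=
  IsPrimeIdealOfSubmonoid S Q ∧ I ⊆ Q ∧
    ∀ Q' : Set G, IsPrimeIdealOfSubmonoid S Q' → I ⊆ Q' → Q' ⊆ Q → Q' = Q

/-- `P`, a prime ideal of `S`, lies over `Q`, a prime ideal of `S ∩ H`:
`Q` is minimal over `P ∩ H` and `P ∩ H` is the intersection of all primes of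
`S ∩ H` minimal over `P ∩ H`. -/
def LiesOver (S : Submonoid G) (H : Subgroup G) (P Q : Set G) : Prop :=
  IsPrimeIdealOfSubmonoid S P ∧
  IsMinimalPrimeOver (S ⊓ H.toSubmonoid) (P ∩ (H : Set G)) Q ∧
  P ∩ (H : Set G) =
    ⋂₀ {Q' : Set G | IsMinimalPrimeOver (S ⊓ H.toSubmonoid) (P ∩ (H : Set G)) Q'}

/-- the unit group of a submonoid of a group, as a subgroup. -/
def unitGroup (S : Submonoid G) : Subgroup G where
  carrier := {g : G | g ∈ S ∧ g⁻¹ ∈ S}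
  one_mem' := ⟨S.one_mem, by simpa using S.one_mem⟩
  mul_mem' := by
    intro a b ha hb
    exact ⟨S.mul_mem ha.1 hb.1, by
      rw [mul_inv_rev]; exact S.mul_mem hb.2 ha.2⟩
  inv_mem' := by
    intro a ha
    exact ⟨ha.2, by simpa using ha.1⟩

/-- `S` is a maximal order within its group of quotients. -/
def IsMaximalOrderWithin (S : Submonoid G) : Prop :=
  ∀ T : Submonoid G, S ≤ T → (T : Set G) ⊆ quotSet S →
    (∃ a ∈ quotSet S, ∃ b ∈ quotSet S, ∀ t ∈ T, a * t * b ∈ S) → T = S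

/-- a chain `∅ = Q₀ ⊂ Q₁ ⊂ ⋯ ⊂ Qₙ` of prime ideals of `S` (of length `n`). -/
def HasMonoidDimChain (S : Submonoid G) (n : ℕ) : Prop :=
  ∃ c : Fin (n + 1) → Set G, c 0 = ∅ ∧
    (∀ i : Fin (n + 1), i ≠ 0 → IsPrimeIdealOfSubmonoid S (c i)) ∧
    ∀ i j : Fin (n + 1), i < j → c i ⊂ c j

/-- the prime dimension of the monoid `S` equals `n`. -/
def MonoidDimEq (S : Submonoid G) (n : ℕ) : Prop :=
  HasMonoidDimChain S n ∧ ¬ HasMonoidDimChain S (n + 1)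

/-- a chain `∅ = Q₀ ⊂ Q₁ ⊂ ⋯ ⊂ Qₙ = P` of prime ideals ending at `P`. -/
def HasMonoidHeightChain (S : Submonoid G) (P : Set G) (n : ℕ) : Prop :=
  ∃ c : Fin (n + 1) → Set G, c 0 = ∅ ∧ c (Fin.last n) = P ∧
    (∀ i : Fin (n + 1), i ≠ 0 → IsPrimeIdealOfSubmonoid S (c i)) ∧
    ∀ i j : Fin (n + 1), i < j → c i ⊂ c j

/-- the height of the prime ideal `P` of `S` equals `n`. -/
def MonoidHeightEq (S : Submonoid G) (P : Set G) (n : ℕ) : Prop :=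
  HasMonoidHeightChain S P n ∧ ¬ HasMonoidHeightChain S P (n + 1)

/-- a chain `Q₀ ⊂ ⋯ ⊂ Qₙ` of primes of `S` containing `P`; this corresponds to a
chain of primes of the Rees quotient `S/P` (including its zero ideal). -/
def HasDimChainOver (S : Submonoid G) (P : Set G) (n : ℕ) : Prop :=
  ∃ c : Fin (n + 1) → Set G,
    (∀ i, IsPrimeIdealOfSubmonoid S (c i) ∧ P ⊆ c i) ∧
    ∀ i j : Fin (n + 1), i < j → c i ⊂ c j

/-- the prime dimension of the Rees quotient `S/P` equals `n`. -/
def DimOverEq (S : Submonoid G) (P : Set G) (n : ℕ) : Prop :=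
  HasDimChainOver S P n ∧ ¬ HasDimChainOver S P (n + 1)

/-- the Rees quotient `S/P` contains a free abelian subsemigroup of rank `k`. -/
def HasFreeAbelianInRank (S : Submonoid G) (P : Set G) (k : ℕ) : Prop :=
  ∃ x : Fin k → G, (∀ i, x i ∈ S ∧ x i ∉ P) ∧
    (∀ i j, x i * x j = x j * x i) ∧
    (∀ m : Fin k → ℕ, m ≠ 0 → (List.ofFn fun i => x i ^ m i).prod ∉ P) ∧
    ∀ m m' : Fin k → ℕ,
      (List.ofFn fun i => x i ^ m i).prod = (List.ofFn fun i => x i ^ m' i).prod → m = m'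

/-- the rank of the Rees quotient monoid `S/P` equals `r`. -/
def ReesRankEq (S : Submonoid G) (P : Set G) (r : ℕ) : Prop :=
  HasFreeAbelianInRank S P r ∧ ¬ HasFreeAbelianInRank S P (r + 1)

/-- the factor `B/A` is a cyclic group, generated by the image of some `x ∈ B`. -/
def FactorCyclic (A B : Subgroup G) : Prop :=
  ∃ x ∈ B, ∀ y ∈ B, ∃ k : ℤ, (x ^ k)⁻¹ * y ∈ A

/-- the factor `B/A` is an infinite cyclic group. -/
def FactorInfiniteCyclic (A B : Subgroup G) : Prop :=
  ∃ x ∈ B, (∀ y ∈ B, ∃ k : ℤ, (x ^ k)⁻¹ * y ∈ A) ∧ ∀ k : ℤ, x ^ k ∈ A → k = 0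

end GroupMonoidDefs

/-- a group is polycyclic-by-finite: it has a subnormal series with each factor
cyclic or finite. -/
def IsPolycyclicByFinite (G : Type u) [Group G] : Prop :=
  ∃ (n : ℕ) (c : Fin (n + 1) → Subgroup G),
    c 0 = ⊥ ∧ c (Fin.last n) = ⊤ ∧
    ∀ i : Fin n, c i.castSucc ≤ c i.succ ∧
      (∀ x ∈ c i.succ, ∀ y ∈ c i.castSucc, x * y * x⁻¹ ∈ c i.castSucc) ∧
      (FactorCyclic (c i.castSucc) (c i.succ) ∨ (c i.castSucc).relIndex (c i.succ) ≠ 0)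

/-- a group is poly-(infinite cyclic): it has a subnormal series with each factor
infinite cyclic. -/
def IsPolyInfiniteCyclicGroup (G : Type u) [Group G] : Prop :=
  ∃ (n : ℕ) (c : Fin (n + 1) → Subgroup G),
    c 0 = ⊥ ∧ c (Fin.last n) = ⊤ ∧
    ∀ i : Fin n, c i.castSucc ≤ c i.succ ∧
      (∀ x ∈ c i.succ, ∀ y ∈ c i.castSucc, x * y * x⁻¹ ∈ c i.castSucc) ∧
      FactorInfiniteCyclic (c i.castSucc) (c i.succ)

/-- a group is abelian-by-finite: it has an abelian normal subgroup of finite index. -/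
def IsAbelianByFinite (G : Type u) [Group G] : Prop :=
  ∃ A : Subgroup G, A.Normal ∧ A.FiniteIndex ∧ ∀ x ∈ A, ∀ y ∈ A, x * y = y * x

/-- `Δ⁺(G)`: the set of periodic elements having finitely many conjugates. -/
def deltaPlusSet (G : Type u) [Group G] : Set G :=
  {g : G | (∃ n : ℕ, 0 < n ∧ g ^ n = 1) ∧ (conjClassSet g).Finite}

/-- a group is dihedral free if the normalizer of every infinite dihedral subgroup
has infinite index. -/
def IsDihedralFree (G : Type u) [Group G] : Prop :=
  ∀ D : Subgroup G, Nonempty (D ≃* DihedralGroup 0) → (Subgroup.normalizer (D : Set G)).index = 0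

/-- the torsion-free rank of a (finitely generated abelian-by-finite) group:
the rank of a free abelian subgroup of finite index. -/
def HasTorsionFreeRank (G : Type u) [Group G] (r : ℕ) : Prop :=
  ∃ A : Subgroup G, A.FiniteIndex ∧ Nonempty (A ≃* Multiplicative (Fin r → ℤ))

/-- `B/A` is a plinth section of `G`: a nontrivial torsion-free abelian section
which is rationally irreducible under every subgroup of finite index of `G`. -/
def IsPlinthSection (G : Type u) [Group G] (A B : Subgroup G) : Prop :=
  A < B ∧
  (∀ x ∈ B, ∀ y ∈ B, x * y * x⁻¹ * y⁻¹ ∈ A) ∧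
  (∀ x ∈ B, ∀ n : ℕ, 0 < n → x ^ n ∈ A → x ∈ A) ∧
  ∀ W : Subgroup G, W.FiniteIndex →
    ∀ C : Subgroup G, A ≤ C → C ≤ B →
      (∀ w ∈ W, ∀ c ∈ C, w * c * w⁻¹ ∈ C) →
      (C = A ∨ ∀ x ∈ B, ∃ n : ℕ, 0 < n ∧ x ^ n ∈ C)

/-- the plinth length of `G` equals `p`: some finite index subgroup `G₀` has a
series whose factors are finite or plinths, with exactly `p` plinth factors. -/
def PlinthLengthEq (G : Type u) [Group G] (p : ℕ) : Prop :=
  ∃ G₀ : Subgroup G, G₀.FiniteIndex ∧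
    ∃ (n : ℕ) (c : Fin (n + 1) → Subgroup G) (pl : Fin n → Bool),
      c 0 = ⊥ ∧ c (Fin.last n) = G₀ ∧
      (∀ i : Fin n, c i.castSucc ≤ c i.succ) ∧
      (∀ i : Fin (n + 1), ∀ g ∈ G₀, ∀ x ∈ c i, g * x * g⁻¹ ∈ c i) ∧
      (∀ i : Fin n,
        (pl i = true → IsPlinthSection G (c i.castSucc) (c i.succ)) ∧
        (pl i = false → (c i.castSucc).relIndex (c i.succ) ≠ 0)) ∧
      (Finset.univ.filter fun i => pl i = true).card = p

/-- (two-sided) ideal of an abstract monoid. -/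
def IsIdealOfMonoid (M : Type u) [Monoid M] (I : Set M) : Prop :=
  I.Nonempty ∧ ∀ s x t : M, x ∈ I → s * x * t ∈ I

/-- prime ideal of an abstract monoid. -/
def IsPrimeIdealOfMonoid (M : Type u) [Monoid M] (P : Set M) : Prop :=
  IsIdealOfMonoid M P ∧ P ≠ Set.univ ∧
    ∀ I J : Set M, IsIdealOfMonoid M I → IsIdealOfMonoid M J →
      I * J ⊆ P → I ⊆ P ∨ J ⊆ P

/-- a realization of a group of (two-sided) quotients of a monoid `S`. -/
structure GroupOfQuotientsRealization (S : Type u) [Monoid S] : Type (u + 1) where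
  carrier : Type u
  [grp : Group carrier]
  emb : S →* carrier
  inj : Function.Injective emb
  quot : ∀ g : carrier, ∃ s t : S, g = emb s * (emb t)⁻¹

section RingDefs

/-- two-sided ideal of a ring, as a set. -/
def IsTwoSidedIdealSet (R : Type u) [Ring R] (I : Set R) : Prop :=
  (0 : R) ∈ I ∧ (∀ x ∈ I, ∀ y ∈ I, x + y ∈ I) ∧ (∀ x ∈ I, -x ∈ I) ∧
    ∀ r : R, ∀ x ∈ I, r * x ∈ I ∧ x * r ∈ I

/-- prime two-sided ideal of a (possibly noncommutative) ring. -/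
def IsPrimeTwoSidedIdeal (R : Type u) [Ring R] (P : Set R) : Prop :=
  IsTwoSidedIdealSet R P ∧ P ≠ Set.univ ∧
    ∀ a b : R, (∀ r : R, a * r * b ∈ P) → a ∈ P ∨ b ∈ P

/-- a prime ring. -/
def IsPrimeRing (R : Type u) [Ring R] : Prop :=
  ∀ a b : R, (∀ r : R, a * r * b = 0) → a = 0 ∨ b = 0

/-- a chain `P₀ ⊂ ⋯ ⊂ Pₙ = P` of prime two-sided ideals ending at `P`. -/
def HasPrimeChainTo (R : Type u) [Ring R] (P : Set R) (n : ℕ) : Prop :=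
  ∃ c : Fin (n + 1) → Set R, (∀ i, IsPrimeTwoSidedIdeal R (c i)) ∧
    (∀ i j : Fin (n + 1), i < j → c i ⊂ c j) ∧ c (Fin.last n) = P

/-- the height of the prime two-sided ideal `P` equals `n`. -/
def RingHeightEq (R : Type u) [Ring R] (P : Set R) (n : ℕ) : Prop :=
  HasPrimeChainTo R P n ∧ ¬ HasPrimeChainTo R P (n + 1)

/-- a chain `P₀ ⊂ ⋯ ⊂ Pₙ` of prime two-sided ideals of `R`. -/
def HasRingPrimeChain (R : Type u) [Ring R] (n : ℕ) : Prop :=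
  ∃ c : Fin (n + 1) → Set R, (∀ i, IsPrimeTwoSidedIdeal R (c i)) ∧
    ∀ i j : Fin (n + 1), i < j → c i ⊂ c j

/-- the classical Krull dimension of `R` equals `n`. -/
def ClKdimEq (R : Type u) [Ring R] (n : ℕ) : Prop :=
  HasRingPrimeChain R n ∧ ¬ HasRingPrimeChain R (n + 1)

/-- a prime two-sided ideal minimal over the set `I`. -/
def IsMinimalPrimeOverRing (R : Type u) [Ring R] (I P : Set R) : Prop :=
  IsPrimeTwoSidedIdeal R P ∧ I ⊆ P ∧
    ∀ P' : Set R, IsPrimeTwoSidedIdeal R P' → I ⊆ P' → P' ⊆ P → P' = P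

/-- `f : R →+* Q` realizes `Q` as the classical (two-sided) quotient ring of `R`. -/
def IsClassicalQuotientRing {R Q : Type u} [Ring R] [Ring Q] (f : R →+* Q) : Prop :=
  Function.Injective f ∧
  (∀ r : R, IsRegular r → IsUnit (f r)) ∧
  (∀ q : Q, ∃ r s : R, IsRegular s ∧ q * f s = f r) ∧
  (∀ q : Q, ∃ r s : R, IsRegular s ∧ f s * q = f r)

/-- `R` is a maximal order: for every realization of its classical quotient ring `Q`,
there is no intermediate ring `R ⊆ T ⊆ Q` with `aTb ⊆ R` for regular `a b ∈ Q`
other than (the image of) `R` itself. -/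
def IsRingMaximalOrder (R : Type u) [Ring R] : Prop :=
  ∀ (Q : Type u) [Ring Q], ∀ f : R →+* Q, IsClassicalQuotientRing f →
    ∀ T : Subring Q, (∀ r : R, f r ∈ T) →
      (∃ a b : Q, IsRegular a ∧ IsRegular b ∧
        ∀ t ∈ T, ∃ r : R, a * t * b = f r) →
      ∀ t ∈ T, ∃ r : R, t = f r

/-- `R` satisfies a polynomial identity: a monic noncommutative polynomial with
integer coefficients vanishing identically on `R`. -/
def IsPIRing (R : Type u) [Ring R] : Prop :=
  ∃ (n : ℕ) (f : MonoidAlgebra ℤ (FreeMonoid (Fin n))),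
    (∃ w : FreeMonoid (Fin n), f.coeff w = 1 ∧
      ∀ w' : FreeMonoid (Fin n), f.coeff w' ≠ 0 →
        (FreeMonoid.toList w').length ≤ (FreeMonoid.toList w).length) ∧
    ∀ v : Fin n → R,
      (MonoidAlgebra.lift ℤ R (FreeMonoid (Fin n))) (FreeMonoid.lift v) f = 0

end RingDefs

/-- the `K`-linear span `K[Q]` of a subset `Q` of a monoid `M` inside `K[M]`. -/
def monoidSpan (K : Type u) [Field K] {M : Type v} [Monoid M] (Q : Set M) :
    Set (MonoidAlgebra K M) :=
  ↑(Submodule.span K ((fun m : M => (MonoidAlgebra.of K M m : MonoidAlgebra K M)) '' Q))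

/-- the `K`-linear span `K[Q]` of a subset `Q ⊆ S` inside the semigroup algebra `K[S]`. -/
def submonoidSpan (K : Type u) [Field K] {G : Type v} [Group G] (S : Submonoid G)
    (Q : Set G) : Set (MonoidAlgebra K ↥S) :=
  ↑(Submodule.span K
      ((fun s : ↥S => (MonoidAlgebra.of K ↥S s : MonoidAlgebra K ↥S)) ''
        {s : ↥S | (s : G) ∈ Q}))

section AuxLemmas

variable {G : Type u} [Group G]

/-- If `a⁻¹ * b ∈ H` where `H` consists of periodic elements with finite
conjugacy classes, then some positive power of `b` equals that power of `a`. -/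
lemma aux_pow_eq_of_deltaPlus (H : Subgroup G) [hHn : H.Normal]
    (hH : (H : Set G) = deltaPlusSet G) (a b : G) (hab : a⁻¹ * b ∈ H) :
    ∃ N : ℕ, 1 ≤ N ∧ b ^ N = a ^ N := by
  set h : G := a⁻¹ * b with hhdef
  have hb : b = a * h := by rw [hhdef]; group
  have hΔ : h ∈ deltaPlusSet G := by rw [← hH]; exact hab
  obtain ⟨-, hfin⟩ := hΔ
  -- find a positive `m` with `a ^ m` commuting with `h`
  have hexm : ∃ m : ℕ, 1 ≤ m ∧ Commute (a ^ m) h := by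
    haveI : Finite ↥(conjClassSet h) := hfin.to_subtype
    obtain ⟨i, j, hij, hfij⟩ :=
      Finite.exists_ne_map_eq_of_infinite
        (fun i : ℕ => (⟨a ^ i * h * (a ^ i)⁻¹, ⟨a ^ i, rfl⟩⟩ : ↥(conjClassSet h)))
    have hfij' : a ^ i * h * (a ^ i)⁻¹ = a ^ j * h * (a ^ j)⁻¹ :=
      congrArg Subtype.val hfij
    rcases lt_or_gt_of_ne hij with hlt | hlt
    · refine ⟨j - i, by omega, ?_⟩
      have hj : a ^ j = a ^ i * a ^ (j - i) := by
        rw [← pow_add]; congr 1; omega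
      have h2 : a ^ (j - i) * h * (a ^ (j - i))⁻¹ = h := by
        have e1 : a ^ (j - i) * h * (a ^ (j - i))⁻¹ =
            (a ^ i)⁻¹ * (a ^ j * h * (a ^ j)⁻¹) * a ^ i := by
          rw [hj]; group
        rw [e1, ← hfij']; group
      have := mul_inv_eq_iff_eq_mul.mp h2
      exact this
    · refine ⟨i - j, by omega, ?_⟩
      have hj : a ^ i = a ^ j * a ^ (i - j) := by
        rw [← pow_add]; congr 1; omega
      have h2 : a ^ (i - j) * h * (a ^ (i - j))⁻¹ = h := by
        have e1 : a ^ (i - j) * h * (a ^ (i - j))⁻¹ =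
            (a ^ j)⁻¹ * (a ^ i * h * (a ^ i)⁻¹) * a ^ j := by
          rw [hj]; group
        rw [e1, hfij']; group
      exact mul_inv_eq_iff_eq_mul.mp h2
  obtain ⟨m, hm, hcomm⟩ := hexm
  -- inductive form of `(a*h)^k`
  have key : ∀ k : ℕ, ∃ c : G, c ∈ H ∧ Commute (a ^ m) c ∧ b ^ k = a ^ k * c := by
    intro k
    induction k with
    | zero => exact ⟨1, one_mem _, Commute.one_right _, by simp⟩
    | succ k ih =>
      obtain ⟨c, hcH, hcc, hbk⟩ := ih
      refine ⟨a⁻¹ * c * a * h, ?_, ?_, ?_⟩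
      · exact mul_mem (by simpa using hHn.conj_mem c hcH a⁻¹) hab
      · have hca : Commute (a ^ m) a := (Commute.refl a).pow_left m
        have h1 : Commute (a ^ m) (a⁻¹ * c * a) :=
          (hca.inv_right.mul_right hcc).mul_right hca
        exact h1.mul_right hcomm
      · rw [pow_succ, hbk, hb]; group
  obtain ⟨c, hcH, hcc, hbm⟩ := key m
  have hcΔ : c ∈ deltaPlusSet G := by rw [← hH]; exact hcH
  obtain ⟨⟨q, hq, hcq⟩, -⟩ := hcΔ
  refine ⟨m * q, Nat.one_le_iff_ne_zero.mpr (by positivity), ?_⟩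
  calc b ^ (m * q) = (b ^ m) ^ q := by rw [pow_mul]
    _ = (a ^ m * c) ^ q := by rw [hbm]
    _ = (a ^ m) ^ q * c ^ q := hcc.mul_pow q
    _ = a ^ (m * q) := by rw [hcq, mul_one, ← pow_mul]

lemma aux_pow_form (u p v : G) (N : ℕ) :
    (u * p * v) ^ (N + 1) = u * (p * (v * u)) ^ N * (p * v) := by
  induction N with
  | zero => simp [mul_assoc]
  | succ N ih => rw [pow_succ, ih, pow_succ]; simp [mul_assoc]

/-- Utumi/Lanski style: a `P`-nil element of a prime ideal setting lies in `P`,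
given ACC on right ideals. -/
lemma aux_nil_mem_prime (S : Submonoid G) (hacc : ACCRightIdeals S)
    {P : Set G} (hP : IsPrimeIdealOfSubmonoid S P) {p : G} (hpS : p ∈ S)
    (hnil : ∀ x ∈ S, ∃ n : ℕ, (p * x) ^ (n + 1) ∈ P) : p ∈ P := by
  classical
  by_contra hpP
  obtain ⟨⟨w, hwP⟩, hPS, ideal3⟩ := hP.1
  -- elementwise primeness
  have elemprime : ∀ c ∈ S, (∀ x ∈ S, c * x * c ∈ P) → c ∈ P := by
    intro c hc hcc
    set I : Set G := {y | ∃ u ∈ S, ∃ v ∈ S, y = u * c * v} with hI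
    have hcI : c ∈ I := ⟨1, one_mem _, 1, one_mem _, by simp⟩
    have hIdeal : IsIdealOfSubmonoid S I := by
      refine ⟨⟨c, hcI⟩, ?_, ?_⟩
      · rintro y ⟨u, hu, v, hv, rfl⟩; exact mul_mem (mul_mem hu hc) hv
      · rintro s hs y ⟨u, hu, v, hv, rfl⟩ t ht
        exact ⟨s * u, mul_mem hs hu, v * t, mul_mem hv ht, by simp [mul_assoc]⟩
    have hsq : I * I ⊆ P := by
      rintro z hz
      rw [Set.mem_mul] at hz
      obtain ⟨y1, hy1, y2, hy2, rfl⟩ := hz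
      obtain ⟨u, hu, v, hv, rfl⟩ := hy1
      obtain ⟨u', hu', v', hv', rfl⟩ := hy2
      have hmid : c * (v * u') * c ∈ P := hcc _ (mul_mem hv hu')
      have h1 := ideal3 u hu _ hmid v' hv'
      have e : u * c * v * (u' * c * v') = u * (c * (v * u') * c) * v' := by
        simp [mul_assoc]
      rw [e]; exact h1
    rcases hP.2.2 I I hIdeal hIdeal hsq with h | h
    · exact h hcI
    · exact h hcI
  -- the class of elements of the ideal generated by `p`, outside `P`
  set C : Set G := {c | c ∈ S ∧ c ∉ P ∧ ∃ u ∈ S, ∃ v ∈ S, c = u * p * v} with hC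
  have hpC : p ∈ C := ⟨hpS, hpP, 1, one_mem _, 1, one_mem _, by simp⟩
  set r : G → Set G := fun c => {x | x ∈ S ∧ c * x ∈ P} with hr
  have hrideal : ∀ c ∈ C, IsRightIdealOfSubmonoid S (r c) := by
    intro c hc
    refine ⟨⟨w, hPS hwP, by simpa using ideal3 c hc.1 w hwP 1 (one_mem _)⟩,
      fun x hx => hx.1, ?_⟩
    intro x hx s hs
    refine ⟨mul_mem hx.1 hs, ?_⟩
    have h1 := ideal3 1 (one_mem _) _ hx.2 s hs
    simpa [mul_assoc] using h1
  -- maximal member of the family of right "annihilators"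
  obtain ⟨a, haC, hamax⟩ : ∃ a ∈ C, ∀ c ∈ C, r a ⊆ r c → r c = r a := by
    by_contra hcon
    push_neg at hcon
    choose g hg1 hg2 hg3 using hcon
    let seq : ℕ → {x // x ∈ C} := fun n =>
      Nat.rec ⟨p, hpC⟩ (fun _ prev => ⟨g prev.1 prev.2, hg1 prev.1 prev.2⟩) n
    have hseq : ∀ n, seq (n + 1) = ⟨g (seq n).1 (seq n).2, hg1 _ _⟩ :=
      fun n => rfl
    obtain ⟨N, hN⟩ := hacc (fun n => r (seq n).1)
      (fun n => hrideal _ (seq n).2)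
      (fun n => hg2 (seq n).1 (seq n).2)
    have h1 : r (seq (N + 1)).1 = r (seq N).1 := hN (N + 1) (Nat.le_succ N)
    exact hg3 (seq N).1 (seq N).2 h1
  obtain ⟨haS, haP, u, hu, v, hv, hauv⟩ := haC
  have hmain : ∀ x ∈ S, a * x * a ∈ P := by
    intro x hx
    by_contra haxa
    have hxaP : x * a ∉ P := fun hxa =>
      haxa (by simpa [mul_assoc] using ideal3 a haS _ hxa 1 (one_mem _))
    have hxaS : x * a ∈ S := mul_mem hx haS
    have hnil' : ∃ n : ℕ, (x * a) ^ (n + 1) ∈ P := by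
      obtain ⟨n, hn⟩ := hnil (v * (x * u)) (mul_mem hv (mul_mem hx hu))
      refine ⟨n + 1, ?_⟩
      have e : x * a = x * u * p * v := by rw [hauv]; simp [mul_assoc]
      rw [e, aux_pow_form]
      exact ideal3 _ (mul_mem hx hu) _ hn _ (mul_mem hpS hv)
    set k := Nat.find hnil' with hkdef
    have hk : (x * a) ^ (k + 1) ∈ P := Nat.find_spec hnil'
    have hkmin : ∀ j, j < k → (x * a) ^ (j + 1) ∉ P :=
      fun j hj => Nat.find_min hnil' hj
    have hk1 : 1 ≤ k := by
      rcases Nat.eq_zero_or_pos k with h0 | h; swap; · exact h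
      exfalso; apply hxaP
      have := hk; rw [h0] at this; simpa using this
    obtain ⟨k', hk'⟩ : ∃ k', k = k' + 1 := ⟨k - 1, by omega⟩
    set e : G := (x * a) ^ k with hedef
    have heC : e ∈ C := by
      refine ⟨pow_mem hxaS k, ?_,
        (x * a) ^ k' * (x * u), mul_mem (pow_mem hxaS k') (mul_mem hx hu),
        v, hv, ?_⟩
      · intro heP
        exact hkmin k' (by omega) (by rw [← hk']; exact heP)
      · rw [hedef, hk', pow_succ, hauv]; simp [mul_assoc]
    have hsub : r a ⊆ r e := by
      intro t ht
      refine ⟨ht.1, ?_⟩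
      have h1 := ideal3 ((x * a) ^ k' * x) (mul_mem (pow_mem hxaS k') hx) _ ht.2
        1 (one_mem _)
      have e2 : e * t = (x * a) ^ k' * x * (a * t) * 1 := by
        rw [hedef, hk', pow_succ]; simp [mul_assoc]
      rw [e2]; exact h1
    have heq := hamax e heC hsub
    have hxar : x * a ∈ r e := by
      refine ⟨hxaS, ?_⟩
      rw [hedef, ← pow_succ]
      exact hk
    rw [heq] at hxar
    exact haxa (by rw [mul_assoc]; exact hxar.2)
  exact haP (elemprime a haS hmain)

/-- saturation of prime ideals with respect to the congruence induced by `H`. -/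
lemma aux_saturation (S : Submonoid G) (hacc : ACCRightIdeals S)
    (H : Subgroup G) [hHn : H.Normal] (hH : (H : Set G) = deltaPlusSet G)
    {P : Set G} (hP : IsPrimeIdealOfSubmonoid S P) {p q : G}
    (hpS : p ∈ S) (hqP : q ∈ P) (hpq : p⁻¹ * q ∈ H) : p ∈ P := by
  apply aux_nil_mem_prime S hacc hP hpS
  intro x hx
  have hmem : (p * x)⁻¹ * (q * x) ∈ H := by
    have e : (p * x)⁻¹ * (q * x) = x⁻¹ * (p⁻¹ * q) * x := by group
    rw [e]
    simpa using hHn.conj_mem _ hpq x⁻¹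
  obtain ⟨N, hN, hNe⟩ := aux_pow_eq_of_deltaPlus H hH (p * x) (q * x) hmem
  obtain ⟨M, rfl⟩ : ∃ M, N = M + 1 := ⟨N - 1, by omega⟩
  refine ⟨M, ?_⟩
  rw [← hNe]
  have hqS : q ∈ S := hP.1.2.1 hqP
  have hqx : q * x ∈ P := by simpa using hP.1.2.2 1 (one_mem _) q hqP x hx
  have h1 := hP.1.2.2 ((q * x) ^ M) (pow_mem (mul_mem hqS hx) M) _ hqx 1 (one_mem _)
  simpa [pow_succ] using h1

variable {G' : Type v} [Group G']

lemma aux_image_ideal (π : G →* G') (S : Submonoid G) (I : Set G)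
    (hI : IsIdealOfSubmonoid S I) :
    IsIdealOfSubmonoid (Submonoid.map π S) (π '' I) := by
  obtain ⟨⟨x0, hx0⟩, hIS, hIcl⟩ := hI
  refine ⟨⟨π x0, x0, hx0, rfl⟩, ?_, ?_⟩
  · rintro _ ⟨x, hx, rfl⟩
    exact SetLike.mem_coe.mpr (Submonoid.mem_map.mpr ⟨x, hIS hx, rfl⟩)
  · intro s hs x hx t ht
    obtain ⟨s₀, hs₀, rfl⟩ := Submonoid.mem_map.mp hs
    obtain ⟨t₀, ht₀, rfl⟩ := Submonoid.mem_map.mp ht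
    obtain ⟨x₀, hx₀, rfl⟩ := hx
    exact ⟨s₀ * x₀ * t₀, hIcl s₀ hs₀ x₀ hx₀ t₀ ht₀, by simp [map_mul]⟩

lemma aux_preimage_ideal (π : G →* G') (S : Submonoid G) (I' : Set G')
    (hI' : IsIdealOfSubmonoid (Submonoid.map π S) I') :
    IsIdealOfSubmonoid S (π ⁻¹' I' ∩ ↑S) := by
  obtain ⟨⟨y0, hy0⟩, hIS', hcl'⟩ := hI'
  obtain ⟨x0, hx0S, hx0⟩ := Submonoid.mem_map.mp (SetLike.mem_coe.mp (hIS' hy0))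
  refine ⟨⟨x0, ⟨by rw [Set.mem_preimage, hx0]; exact hy0, hx0S⟩⟩,
    fun x hx => hx.2, ?_⟩
  intro s hs x hx t ht
  refine ⟨?_, mul_mem (mul_mem hs hx.2) ht⟩
  rw [Set.mem_preimage, map_mul, map_mul]
  exact hcl' _ (Submonoid.mem_map.mpr ⟨s, hs, rfl⟩) _ hx.1 _
    (Submonoid.mem_map.mpr ⟨t, ht, rfl⟩)

end AuxLemmas

/-- `Spec S → Spec (S/∼)` is a bijection,
where `∼` is the congruence determined by `H = Δ⁺(G)`. -/
theorem spec_bijection_deltaPlus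
    {G : Type u} [Group G] (S : Submonoid G)
    (hpoly : IsPolycyclicByFinite G)
    (hquot : IsGroupOfQuotients S)
    (hacc : ACCRightIdeals S)
    (H : Subgroup G) [hHn : H.Normal]
    (hH : (H : Set G) = deltaPlusSet G) :
    Set.BijOn (fun P : Set G => (⇑(QuotientGroup.mk' H)) '' P)
      {P : Set G | IsPrimeIdealOfSubmonoid S P}
      {P' : Set (G ⧸ H) |
        IsPrimeIdealOfSubmonoid (Submonoid.map (QuotientGroup.mk' H) S) P'} := by
  classical
  have hsat : ∀ P : Set G, IsPrimeIdealOfSubmonoid S P → ∀ x ∈ S, ∀ q ∈ P,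
      QuotientGroup.mk' H x = QuotientGroup.mk' H q → x ∈ P := by
    intro P hP x hx q hq hxq
    have hmem : x⁻¹ * q ∈ H := by
      rw [QuotientGroup.mk'_eq_mk'] at hxq
      obtain ⟨z, hz, hzz⟩ := hxq
      rw [← hzz, inv_mul_cancel_left]; exact hz
    exact aux_saturation S hacc H hH hP hx hq hmem
  refine ⟨?_, ?_, ?_⟩
  · -- MapsTo
    intro P hP
    simp only [Set.mem_setOf_eq] at hP ⊢
    refine ⟨aux_image_ideal _ S P hP.1, ?_, ?_⟩
    · intro hEq
      apply hP.2.1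
      apply Set.Subset.antisymm hP.1.2.1
      intro s hs
      have h1 : QuotientGroup.mk' H s ∈ (⇑(QuotientGroup.mk' H)) '' P := by
        rw [hEq]
        exact SetLike.mem_coe.mpr (Submonoid.mem_map.mpr ⟨s, hs, rfl⟩)
      obtain ⟨q, hq, hqs⟩ := h1
      exact hsat P hP s hs q hq hqs.symm
    · intro I' J' hI' hJ' hsub
      have hI := aux_preimage_ideal (QuotientGroup.mk' H) S I' hI'
      have hJ := aux_preimage_ideal (QuotientGroup.mk' H) S J' hJ'
      have hIJ : (⇑(QuotientGroup.mk' H) ⁻¹' I' ∩ ↑S) *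
          (⇑(QuotientGroup.mk' H) ⁻¹' J' ∩ ↑S) ⊆ P := by
        rintro z hz
        rw [Set.mem_mul] at hz
        obtain ⟨i, hi, j, hj, rfl⟩ := hz
        have h2 : QuotientGroup.mk' H (i * j) ∈ (⇑(QuotientGroup.mk' H)) '' P := by
          rw [map_mul]
          exact hsub (Set.mul_mem_mul hi.1 hj.1)
        obtain ⟨q, hq, hqz⟩ := h2
        exact hsat P hP (i * j) (mul_mem hi.2 hj.2) q hq hqz.symm
      rcases hP.2.2 _ _ hI hJ hIJ with h | h
      · left
        intro i' hi'
        obtain ⟨s, hsS, rfl⟩ := Submonoid.mem_map.mp (SetLike.mem_coe.mp (hI'.2.1 hi'))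
        exact ⟨s, h ⟨hi', hsS⟩, rfl⟩
      · right
        intro j' hj'
        obtain ⟨s, hsS, rfl⟩ := Submonoid.mem_map.mp (SetLike.mem_coe.mp (hJ'.2.1 hj'))
        exact ⟨s, h ⟨hj', hsS⟩, rfl⟩
  · -- InjOn
    intro P₁ hP₁ P₂ hP₂ hEq
    simp only [Set.mem_setOf_eq] at hP₁ hP₂
    have hEq' : (⇑(QuotientGroup.mk' H)) '' P₁ = (⇑(QuotientGroup.mk' H)) '' P₂ := hEq
    ext x
    constructor
    · intro hx
      have h1 : QuotientGroup.mk' H x ∈ (⇑(QuotientGroup.mk' H)) '' P₂ := by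
        rw [← hEq']; exact ⟨x, hx, rfl⟩
      obtain ⟨q, hq, hqx⟩ := h1
      exact hsat P₂ hP₂ x (hP₁.1.2.1 hx) q hq hqx.symm
    · intro hx
      have h1 : QuotientGroup.mk' H x ∈ (⇑(QuotientGroup.mk' H)) '' P₁ := by
        rw [hEq']; exact ⟨x, hx, rfl⟩
      obtain ⟨q, hq, hqx⟩ := h1
      exact hsat P₁ hP₁ x (hP₂.1.2.1 hx) q hq hqx.symm
  · -- SurjOn
    intro P' hP'
    simp only [Set.mem_setOf_eq] at hP'
    set P : Set G := ⇑(QuotientGroup.mk' H) ⁻¹' P' ∩ ↑S with hPdef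
    have hPideal : IsIdealOfSubmonoid S P := aux_preimage_ideal _ S P' hP'.1
    have himg : (⇑(QuotientGroup.mk' H)) '' P = P' := by
      apply Set.Subset.antisymm
      · rintro _ ⟨x, hx, rfl⟩; exact hx.1
      · intro p' hp'
        obtain ⟨s, hsS, rfl⟩ := Submonoid.mem_map.mp (SetLike.mem_coe.mp (hP'.1.2.1 hp'))
        exact ⟨s, ⟨hp', hsS⟩, rfl⟩
    have hPprime : IsPrimeIdealOfSubmonoid S P := by
      refine ⟨hPideal, ?_, ?_⟩
      · intro hPeq
        apply hP'.2.1
        apply Set.Subset.antisymm hP'.1.2.1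
        intro s' hs'
        obtain ⟨s, hsS, rfl⟩ := Submonoid.mem_map.mp (SetLike.mem_coe.mp hs')
        have h1 : s ∈ P := by rw [hPeq]; exact hsS
        exact h1.1
      · intro I J hI hJ hIJ
        have hI' := aux_image_ideal (QuotientGroup.mk' H) S I hI
        have hJ' := aux_image_ideal (QuotientGroup.mk' H) S J hJ
        have hsub : (⇑(QuotientGroup.mk' H) '' I) * (⇑(QuotientGroup.mk' H) '' J)
            ⊆ P' := by
          rintro z hz
          rw [Set.mem_mul] at hz
          obtain ⟨i', hi', j', hj', rfl⟩ := hz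
          obtain ⟨i, hi, rfl⟩ := hi'
          obtain ⟨j, hj, rfl⟩ := hj'
          have h1 : i * j ∈ P := hIJ (Set.mul_mem_mul hi hj)
          rw [← map_mul]
          exact h1.1
        rcases hP'.2.2 _ _ hI' hJ' hsub with h | h
        · left
          intro i hi
          exact ⟨h ⟨i, hi, rfl⟩, hI.2.1 hi⟩
        · right
          intro j hj
          exact ⟨h ⟨j, hj, rfl⟩, hJ.2.1 hj⟩
    exact ⟨P, hPprime, himg⟩
end

section
/- Let S be a submonoid of an abelian-by-finite group G = SS⁻¹ and let A be an abelian normal subgroup of finite index in G. If S is a maximal order in G, then S ∩ A is G-invariant and S ∩ A is a maximal order in its group of quotients. -/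
open scoped Pointwise

universe u v

section Aux13
variable {G : Type u} [Group G]
open Submonoid

private lemma aux13_commute_closure {X : Set G} {a : G}
    (h : ∀ x ∈ X, a * x = x * a) :
    ∀ y ∈ Submonoid.closure X, a * y = y * a := by
  intro y hy
  induction hy using Submonoid.closure_induction with
  | mem x hx => exact h x hx
  | one => simp
  | mul x y hx hy ihx ihy => rw [← mul_assoc, ihx, mul_assoc, ihy, ← mul_assoc]

private lemma aux13_closure_union_factor {X Y : Set G}
    (hcomm : ∀ x ∈ X, ∀ y ∈ Y, x * y = y * x) :
    ∀ m ∈ Submonoid.closure (X ∪ Y),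
      ∃ x ∈ Submonoid.closure X, ∃ y ∈ Submonoid.closure Y, m = x * y := by
  have h1 : ∀ y ∈ Y, ∀ x ∈ Submonoid.closure X, y * x = x * y := by
    intro y hy
    exact aux13_commute_closure (fun x hx => (hcomm x hx y hy).symm)
  have key : ∀ x ∈ Submonoid.closure X, ∀ y ∈ Submonoid.closure Y, x * y = y * x := by
    intro x hx
    exact aux13_commute_closure (fun y hy => (h1 y hy x hx).symm)
  intro m hm
  let P : Submonoid G :=
    { carrier := {m : G | ∃ x ∈ Submonoid.closure X, ∃ y ∈ Submonoid.closure Y, m = x * y}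
      one_mem' := ⟨1, one_mem _, 1, one_mem _, (one_mul 1).symm⟩
      mul_mem' := by
        rintro a b ⟨x, hx, y, hy, rfl⟩ ⟨x', hx', y', hy', rfl⟩
        refine ⟨x * x', mul_mem hx hx', y * y', mul_mem hy hy', ?_⟩
        have h : y * x' = x' * y := (key x' hx' y hy).symm
        rw [mul_assoc x y (x' * y'), ← mul_assoc y x' y', h]
        simp [mul_assoc] }
  have hP : Submonoid.closure (X ∪ Y) ≤ P := by
    rw [Submonoid.closure_le]
    rintro z (hz | hz)
    · exact ⟨z, subset_closure hz, 1, one_mem _, (mul_one z).symm⟩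
    · exact ⟨1, one_mem _, z, subset_closure hz, (one_mul z).symm⟩
  exact hP hm

private lemma aux13_conj_closure_image (g : G) {X : Set G} :
    ∀ m ∈ Submonoid.closure X,
      g * m * g⁻¹ ∈ Submonoid.closure ((fun x => g * x * g⁻¹) '' X) := by
  intro m hm
  induction hm using Submonoid.closure_induction with
  | mem x hx => exact subset_closure ⟨x, hx, rfl⟩
  | one => simpa using one_mem _
  | mul x y hx hy ihx ihy =>
      have h : g * (x * y) * g⁻¹ = (g * x * g⁻¹) * (g * y * g⁻¹) := by group
      rw [h]; exact mul_mem ihx ihy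

/-- Part-1 crux: absorber for the monoid generated by all conjugates of `b`. -/
private lemma aux13_crux {S : Submonoid G} {A : Subgroup G}
    (hab : ∀ x ∈ A, ∀ y ∈ A, x * y = y * x)
    {b : G} (hbS : b ∈ S) (hbA : b ∈ A)
    {C : Set G} (hCA : C ⊆ (A : Set G))
    (hCc : ∀ g : G, ∀ c ∈ C, g * c * g⁻¹ ∈ C)
    (hconj : ∀ c ∈ C, ∃ t ∈ S, c = t * b * t⁻¹) :
    ∀ N : ℕ, ∀ D : Finset G, D.card ≤ N → (D : Set G) ⊆ C \ {b} →
      ∃ d ∈ S, ∀ m ∈ Submonoid.closure (insert b (D : Set G)), m * d ∈ S := by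
  classical
  intro N
  induction N with
  | zero =>
      intro D hcard hD
      have hDe : D = ∅ := Finset.card_eq_zero.mp (Nat.le_zero.mp hcard)
      subst hDe
      refine ⟨1, S.one_mem, ?_⟩
      intro m hm
      rw [Finset.coe_empty] at hm
      have hle : Submonoid.closure (insert b (∅ : Set G)) ≤ S := by
        rw [Submonoid.closure_le]
        intro y hy
        rcases hy with hy | hy
        · exact hy ▸ hbS
        · exact absurd hy (Set.notMem_empty y)
      rw [mul_one]
      exact hle hm
  | succ N ih =>
      intro D hcard hD
      rcases Finset.eq_empty_or_nonempty D with rfl | ⟨c, hc⟩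
      · exact ih ∅ (by simp) (by simp)
      · have hcC : c ∈ C := (hD hc).1
        have hcb : c ≠ b := by
          have := (hD hc).2
          simpa using this
        obtain ⟨t, htS, hct⟩ := hconj c hcC
        set E : Finset G := (D.erase c).image (fun x => t⁻¹ * x * t) with hEdef
        have hEsub : (E : Set G) ⊆ C \ {b} := by
          intro x hx
          rw [hEdef, Finset.coe_image] at hx
          obtain ⟨x₀, hx₀, rfl⟩ := hx
          have hx₀D : x₀ ∈ D := Finset.mem_of_mem_erase (Finset.mem_coe.mp hx₀)
          have hx₀C : x₀ ∈ C := (hD hx₀D).1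
          constructor
          · have h := hCc t⁻¹ x₀ hx₀C
            simpa using h
          · intro hbad
            rw [Set.mem_singleton_iff] at hbad
            have : x₀ = t * b * t⁻¹ := by
              rw [← hbad]; group
            rw [← hct] at this
            exact (Finset.ne_of_mem_erase (Finset.mem_coe.mp hx₀)) this
        have hEcard : E.card ≤ N := by
          have h1 : E.card ≤ (D.erase c).card := Finset.card_image_le
          have h2 := Finset.card_erase_of_mem hc
          omega
        obtain ⟨d₀, hd₀S, hd₀⟩ := ih E hEcard hEsub
        refine ⟨t * d₀, S.mul_mem htS hd₀S, ?_⟩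
        intro m hm
        -- rewrite generating set
        have hDset : (D : Set G) = ((D.erase c : Finset G) : Set G) ∪ {c} := by
          conv_lhs => rw [← Finset.insert_erase hc]
          rw [Finset.coe_insert, Set.insert_eq, Set.union_comm]
        rw [Set.insert_eq, hDset] at hm
        -- commutation facts
        have hDA : ((D.erase c : Finset G) : Set G) ∪ {c} ⊆ (A : Set G) := by
          intro y hy
          rcases hy with hy | hy
          · exact hCA (hD (Finset.mem_of_mem_erase (Finset.mem_coe.mp hy))).1
          · rw [Set.mem_singleton_iff] at hy; exact hy ▸ hCA hcC
        have hcomm1 : ∀ x ∈ ({b} : Set G), ∀ y ∈ ((D.erase c : Finset G) : Set G) ∪ {c},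
            x * y = y * x := by
          intro x hx y hy
          rw [Set.mem_singleton_iff] at hx
          exact hx ▸ hab b hbA y (hDA hy)
        obtain ⟨mb, hmb, m', hm', rfl⟩ := aux13_closure_union_factor hcomm1 m hm
        have hcomm2 : ∀ x ∈ ((D.erase c : Finset G) : Set G), ∀ y ∈ ({c} : Set G),
            x * y = y * x := by
          intro x hx y hy
          rw [Set.mem_singleton_iff] at hy
          exact hy ▸ hab x (hDA (Or.inl hx)) c (hCA hcC)
        obtain ⟨m₂, hm₂, mc, hmc, rfl⟩ := aux13_closure_union_factor hcomm2 m' hm'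
        obtain ⟨j, rfl⟩ := Submonoid.mem_closure_singleton.mp hmc
        -- key computations
        have hcjt : c ^ j * t = t * b ^ j := by
          rw [hct, conj_pow]; group
        have hm₂' : t⁻¹ * m₂ * t ∈ Submonoid.closure (E : Set G) := by
          have h := aux13_conj_closure_image t⁻¹ m₂ hm₂
          simp only [inv_inv] at h
          have hfun : ((fun x => t⁻¹ * x * t) '' ((D.erase c : Finset G) : Set G))
              = (E : Set G) := by
            rw [hEdef, Finset.coe_image]
          rwa [hfun] at h
        have hmbS : mb ∈ S := by
          have hle : Submonoid.closure ({b} : Set G) ≤ S := by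
            rw [Submonoid.closure_le]; intro y hy
            rw [Set.mem_singleton_iff] at hy; exact hy ▸ hbS
          exact hle hmb
        have hinner : ((t⁻¹ * m₂ * t) * b ^ j) * d₀ ∈ S := by
          apply hd₀
          refine Submonoid.mul_mem _ ?_ ?_
          · exact Submonoid.closure_mono (Set.subset_insert b _) hm₂'
          · exact Submonoid.pow_mem _ (Submonoid.subset_closure (Set.mem_insert b _)) j
        have heq : mb * (m₂ * c ^ j) * (t * d₀)
            = mb * (t * (((t⁻¹ * m₂ * t) * b ^ j) * d₀)) := by
          calc mb * (m₂ * c ^ j) * (t * d₀)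
              = mb * (m₂ * (c ^ j * t) * d₀) := by group
            _ = mb * (m₂ * (t * b ^ j) * d₀) := by rw [hcjt]
            _ = mb * (t * (((t⁻¹ * m₂ * t) * b ^ j) * d₀)) := by group
        rw [heq]
        exact S.mul_mem hmbS (S.mul_mem htS hinner)

private lemma aux13_conj_closure {C : Set G} (hC : ∀ g : G, ∀ c ∈ C, g * c * g⁻¹ ∈ C)
    (g : G) : ∀ m ∈ Submonoid.closure C, g * m * g⁻¹ ∈ Submonoid.closure C := by
  intro m hm
  induction hm using Submonoid.closure_induction with
  | mem x hx => exact subset_closure (hC g x hx)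
  | one => simpa using one_mem _
  | mul x y hx hy ihx ihy =>
      have h : g * (x * y) * g⁻¹ = (g * x * g⁻¹) * (g * y * g⁻¹) := by group
      rw [h]; exact mul_mem ihx ihy

private lemma aux13_main {S : Submonoid G} (hquot : IsGroupOfQuotients S)
    (hmax : IsMaximalOrderWithin S) {C : Set G}
    (hCc : ∀ g : G, ∀ c ∈ C, g * c * g⁻¹ ∈ C)
    {d : G} (hd : ∀ m ∈ Submonoid.closure C, m * d ∈ S) :
    ∀ c ∈ C, c ∈ S := by
  intro c hc
  set T : Submonoid G := Submonoid.closure (↑S ∪ C) with hTdef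
  have hST : S ≤ T := fun x hx => Submonoid.subset_closure (Or.inl hx)
  have hTq : (T : Set G) ⊆ quotSet S := fun x _ => hquot x
  have hdec : ∀ t ∈ T, ∃ m ∈ Submonoid.closure C, ∃ s ∈ S, t = m * s := by
    intro t ht
    induction ht using Submonoid.closure_induction with
    | mem x hx =>
        rcases hx with hx | hx
        · exact ⟨1, one_mem _, x, hx, (one_mul x).symm⟩
        · exact ⟨x, subset_closure hx, 1, S.one_mem, (mul_one x).symm⟩
    | one => exact ⟨1, one_mem _, 1, S.one_mem, (one_mul 1).symm⟩
    | mul x y hx hy ihx ihy =>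
        obtain ⟨m, hm, s, hs, rfl⟩ := ihx
        obtain ⟨m', hm', s', hs', rfl⟩ := ihy
        exact ⟨m * (s * m' * s⁻¹), mul_mem hm (aux13_conj_closure hCc s m' hm'),
          s * s', mul_mem hs hs', by group⟩
  have hTS : T = S := by
    apply hmax T hST hTq
    refine ⟨1, ⟨1, S.one_mem, 1, S.one_mem, by simp⟩, d, hquot d, ?_⟩
    intro t ht
    obtain ⟨m, hm, s, hs, rfl⟩ := hdec t ht
    have hms : (1:G) * (m * s) * d = s * ((s⁻¹ * m * s) * d) := by group
    rw [hms]
    have hmem : s⁻¹ * m * s ∈ Submonoid.closure C := by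
      have h := aux13_conj_closure hCc s⁻¹ m hm
      simpa using h
    exact S.mul_mem hs (hd _ hmem)
  have hcT : c ∈ T := Submonoid.subset_closure (Or.inr hc)
  rwa [hTS] at hcT

private lemma aux13_conj_by_S {S : Submonoid G} (hquot : IsGroupOfQuotients S)
    {A : Subgroup G} (hnorm : A.Normal) (hfi : A.FiniteIndex)
    (hab : ∀ x ∈ A, ∀ y ∈ A, x * y = y * x) :
    ∀ x ∈ A, ∀ g : G, ∃ t ∈ S, g * x * g⁻¹ = t * x * t⁻¹ := by
  haveI := hnorm; haveI := hfi
  intro x hx g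
  obtain ⟨s, hs, t, ht, rfl⟩ := hquot g
  have hnpos : A.index ≠ 0 := hfi.index_ne_zero
  have htn : t ^ A.index ∈ A := A.pow_index_mem t
  set p := t ^ (A.index - 1) with hpdef
  have h1 : t ^ A.index = t * p := by
    rw [hpdef, ← pow_succ']
    congr 1
    omega
  have h2 : x * (t * p) = (t * p) * x := by
    rw [← h1]; exact (hab _ htn x hx).symm
  have hkey : t⁻¹ * x * t = p * x * p⁻¹ := by
    calc t⁻¹ * x * t = t⁻¹ * (x * (t * p)) * p⁻¹ := by group
      _ = t⁻¹ * ((t * p) * x) * p⁻¹ := by rw [h2]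
      _ = p * x * p⁻¹ := by group
  refine ⟨s * p, S.mul_mem hs (S.pow_mem ht _), ?_⟩
  calc (s * t⁻¹) * x * (s * t⁻¹)⁻¹ = s * (t⁻¹ * x * t) * s⁻¹ := by group
    _ = s * (p * x * p⁻¹) * s⁻¹ := by rw [hkey]
    _ = (s * p) * x * (s * p)⁻¹ := by group

private lemma aux13_conjset_finite {A : Subgroup G} (hfi : A.FiniteIndex)
    (hab : ∀ x ∈ A, ∀ y ∈ A, x * y = y * x) {b : G} (hbA : b ∈ A) :
    (Set.range fun g : G => g * b * g⁻¹).Finite := by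
  haveI := hfi
  haveI : Finite (G ⧸ A) := Subgroup.finite_quotient_of_finiteIndex
  have hwd : ∀ g g' : G, (g : G ⧸ A) = (g' : G ⧸ A) → g * b * g⁻¹ = g' * b * g'⁻¹ := by
    intro g g' h
    have h2 : g⁻¹ * g' ∈ A := QuotientGroup.eq.mp h
    have h3 : (g⁻¹ * g') * b = b * (g⁻¹ * g') := hab _ h2 b hbA
    have h4 : (g⁻¹ * g') * b * (g⁻¹ * g')⁻¹ = b := by rw [h3]; group
    have h5 : g' * b * g'⁻¹ = g * ((g⁻¹ * g') * b * (g⁻¹ * g')⁻¹) * g⁻¹ := by group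
    rw [h4] at h5
    exact h5.symm
  let f : G ⧸ A → G := fun q =>
    Quotient.liftOn' q (fun g => g * b * g⁻¹) fun g g' h =>
      hwd g g' (Quotient.sound' h)
  have hsub : (Set.range fun g : G => g * b * g⁻¹) ⊆ Set.range f := by
    rintro _ ⟨g, rfl⟩
    exact ⟨QuotientGroup.mk g, rfl⟩
  exact (Set.finite_range f).subset hsub


/-- Lemma B : uniform absorber for a finite commuting family with individual absorbers. -/
private lemma aux13_absorber {A : Subgroup G}
    (hab : ∀ x ∈ A, ∀ y ∈ A, x * y = y * x) (W : Submonoid G)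
    (hWA : (W : Set G) ⊆ (A : Set G))
    (F : Finset G) :
    (F : Set G) ⊆ (A : Set G) →
    (∀ c ∈ F, ∃ e ∈ W, ∀ k : ℕ, c ^ k * e ∈ W) →
    ∃ d ∈ W, ∀ m ∈ Submonoid.closure (F : Set G), m * d ∈ W := by
  classical
  induction F using Finset.induction_on with
  | empty =>
      intro _ _
      refine ⟨1, W.one_mem, ?_⟩
      intro m hm
      rw [Finset.coe_empty, Submonoid.closure_empty, Submonoid.mem_bot] at hm
      subst hm; simpa using W.one_mem
  | @insert c F₀ hcF₀ ih =>
      intro hFA habs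
      obtain ⟨e, heW, he⟩ := habs c (Finset.mem_insert_self c F₀)
      have hF₀A : (F₀ : Set G) ⊆ (A : Set G) := by
        intro x hx; exact hFA (by simpa using Finset.mem_insert_of_mem (by simpa using hx))
      obtain ⟨d₀, hd₀W, hd₀⟩ := ih hF₀A (fun c' hc' => habs c' (Finset.mem_insert_of_mem hc'))
      refine ⟨e * d₀, W.mul_mem heW hd₀W, ?_⟩
      intro m hm
      rw [Finset.coe_insert, Set.insert_eq] at hm
      have hcA : c ∈ A := hFA (by simp)
      have hcomm : ∀ x ∈ ({c} : Set G), ∀ y ∈ (F₀ : Set G), x * y = y * x := by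
        intro x hx y hy
        rw [Set.mem_singleton_iff] at hx
        subst hx
        exact hab x hcA y (hF₀A hy)
      obtain ⟨x, hx, y, hy, rfl⟩ := aux13_closure_union_factor hcomm m hm
      obtain ⟨k, rfl⟩ := Submonoid.mem_closure_singleton.mp hx
      have hyA : y ∈ A := by
        have : Submonoid.closure (F₀ : Set G) ≤ A.toSubmonoid :=
          Submonoid.closure_le.mpr hF₀A
        exact this hy
      have heA : e ∈ A := hWA heW
      have hcomm2 : y * e = e * y := hab y hyA e heA
      have heq : c ^ k * y * (e * d₀) = (c ^ k * e) * (y * d₀) := by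
        calc c ^ k * y * (e * d₀) = c ^ k * (y * e) * d₀ := by group
          _ = c ^ k * (e * y) * d₀ := by rw [hcomm2]
          _ = (c ^ k * e) * (y * d₀) := by group
      rw [heq]
      exact W.mul_mem (he k) (hd₀ y hy)

end Aux13

/-- if `S` is a maximal order then `S ∩ A` is `G`-invariant and a
maximal order in its group of quotients. -/
theorem inter_abelian_invariant_and_maximalOrder_of_maximalOrder
    {G : Type u} [Group G] (S : Submonoid G)
    (hquot : IsGroupOfQuotients S)
    (A : Subgroup G) (hnorm : A.Normal)
    (hab : ∀ x ∈ A, ∀ y ∈ A, x * y = y * x)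
    (hfi : A.FiniteIndex)
    (hmax : IsMaximalOrderWithin S) :
    IsGInvariant ((S : Set G) ∩ (A : Set G)) ∧
    IsMaximalOrderWithin (S ⊓ A.toSubmonoid) := by
  classical
  haveI := hnorm; haveI := hfi
  have hInvS : ∀ (g x : G), x ∈ S → x ∈ A → g * x * g⁻¹ ∈ S := by
    intro g x hxS hxA
    set C : Set G := Set.range (fun h : G => h * x * h⁻¹) with hCdef
    have hCA : C ⊆ (A : Set G) := by
      rintro _ ⟨h, rfl⟩; exact hnorm.conj_mem x hxA h
    have hCc : ∀ g' : G, ∀ c ∈ C, g' * c * g'⁻¹ ∈ C := by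
      rintro g' _ ⟨h, rfl⟩
      exact ⟨g' * h, by dsimp only; group⟩
    have hconj : ∀ c ∈ C, ∃ t ∈ S, c = t * x * t⁻¹ := by
      rintro _ ⟨h, rfl⟩
      obtain ⟨t, htS, heq⟩ := aux13_conj_by_S hquot hnorm hfi hab x hxA h
      exact ⟨t, htS, heq⟩
    have hfin : C.Finite := aux13_conjset_finite hfi hab hxA
    have hxC : x ∈ C := ⟨1, by simp⟩
    set D : Finset G := hfin.toFinset.erase x with hDdef
    have hDsub : (D : Set G) ⊆ C \ {x} := by
      intro y hy
      have hy' : y ∈ hfin.toFinset.erase x := Finset.mem_coe.mp hy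
      exact ⟨hfin.mem_toFinset.mp (Finset.mem_of_mem_erase hy'),
        Finset.ne_of_mem_erase hy'⟩
    obtain ⟨d, hdS, hd⟩ := aux13_crux hab hxS hxA hCA hCc hconj D.card D le_rfl hDsub
    have hins : insert x (D : Set G) = C := by
      rw [hDdef, Finset.coe_erase, Set.Finite.coe_toFinset,
        Set.insert_diff_singleton]
      exact Set.insert_eq_self.mpr hxC
    rw [hins] at hd
    exact aux13_main hquot hmax hCc hd _ ⟨g, rfl⟩
  constructor
  · intro g x hx
    exact ⟨hInvS g x hx.1 hx.2, hnorm.conj_mem x hx.2 g⟩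
  · intro T hWT hTsub hex
    obtain ⟨a, ha, b', hb', habT⟩ := hex
    have hmemW : ∀ {w : G}, w ∈ S ⊓ A.toSubmonoid ↔ w ∈ S ∧ w ∈ A := by
      intro w
      rw [Submonoid.mem_inf, Subgroup.mem_toSubmonoid]
    have ha' : ∃ s ∈ S ⊓ A.toSubmonoid, ∃ t ∈ S ⊓ A.toSubmonoid, a = s * t⁻¹ := ha
    have hb'' : ∃ s ∈ S ⊓ A.toSubmonoid, ∃ t ∈ S ⊓ A.toSubmonoid, b' = s * t⁻¹ := hb'
    obtain ⟨α, hα, β, hβ, rfl⟩ := ha'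
    obtain ⟨γ, hγ, δ, hδ, rfl⟩ := hb''
    refine le_antisymm ?_ hWT
    intro τ hτ
    have hτq : ∃ s ∈ S ⊓ A.toSubmonoid, ∃ t ∈ S ⊓ A.toSubmonoid, τ = s * t⁻¹ := hTsub hτ
    obtain ⟨p, hp, q, hq, hτeq⟩ := hτq
    have hτA : τ ∈ A := by
      rw [hτeq]
      exact A.mul_mem (hmemW.mp hp).2 (A.inv_mem (hmemW.mp hq).2)
    have hαA : α ∈ A := (hmemW.mp hα).2
    have hβA : β ∈ A := (hmemW.mp hβ).2
    have hγA : γ ∈ A := (hmemW.mp hγ).2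
    have hδA : δ ∈ A := (hmemW.mp hδ).2
    have he : ∀ k : ℕ, τ ^ k * (α * γ) ∈ S ⊓ A.toSubmonoid := by
      intro k
      have hσ := habT (τ ^ k) (pow_mem hτ k)
      have hxA' : τ ^ k ∈ A := A.pow_mem hτA k
      set x := τ ^ k with hxk
      have h1 : x * γ = γ * x := hab _ hxA' γ hγA
      have h2 : x * β = β * x := hab _ hxA' β hβA
      have h3 : γ * β = β * γ := hab γ hγA β hβA
      have h4 : (α * β⁻¹ * x * (γ * δ⁻¹)) * (δ * β) = x * (α * γ) := by
        calc (α * β⁻¹ * x * (γ * δ⁻¹)) * (δ * β)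
            = α * β⁻¹ * ((x * γ) * β) := by group
          _ = α * β⁻¹ * ((γ * x) * β) := by rw [h1]
          _ = α * β⁻¹ * (γ * (x * β)) := by group
          _ = α * β⁻¹ * (γ * (β * x)) := by rw [h2]
          _ = α * β⁻¹ * ((γ * β) * x) := by group
          _ = α * β⁻¹ * ((β * γ) * x) := by rw [h3]
          _ = (α * γ) * x := by group
          _ = x * (α * γ) := hab _ (A.mul_mem hαA hγA) _ hxA'
      rw [← h4]
      exact mul_mem hσ (mul_mem hδ hβ)
    have hfinτ : (Set.range fun h : G => h * τ * h⁻¹).Finite :=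
      aux13_conjset_finite hfi hab hτA
    set Cτ : Set G := Set.range (fun h : G => h * τ * h⁻¹) with hCτdef
    have hCcτ : ∀ g' : G, ∀ c ∈ Cτ, g' * c * g'⁻¹ ∈ Cτ := by
      rintro g' _ ⟨h, rfl⟩
      exact ⟨g' * h, by dsimp only; group⟩
    have habs : ∀ c ∈ hfinτ.toFinset, ∃ e ∈ S ⊓ A.toSubmonoid, ∀ k : ℕ,
        c ^ k * e ∈ S ⊓ A.toSubmonoid := by
      intro c hcF
      have hcC : c ∈ Cτ := hfinτ.mem_toFinset.mp hcF
      obtain ⟨h, rfl⟩ := hcC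
      have hegood : α * γ ∈ S ⊓ A.toSubmonoid := mul_mem hα hγ
      refine ⟨h * (α * γ) * h⁻¹, ?_, ?_⟩
      · exact hmemW.mpr ⟨hInvS h _ (hmemW.mp hegood).1 (hmemW.mp hegood).2,
          hnorm.conj_mem _ (hmemW.mp hegood).2 h⟩
      · intro k
        have heq : (h * τ * h⁻¹) ^ k * (h * (α * γ) * h⁻¹)
            = h * (τ ^ k * (α * γ)) * h⁻¹ := by
          rw [conj_pow]; group
        rw [heq]
        have hin := he k
        exact hmemW.mpr ⟨hInvS h _ (hmemW.mp hin).1 (hmemW.mp hin).2,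
          hnorm.conj_mem _ (hmemW.mp hin).2 h⟩
    have hFA : (hfinτ.toFinset : Set G) ⊆ (A : Set G) := by
      intro y hy
      have hyC : y ∈ Cτ := hfinτ.mem_toFinset.mp (Finset.mem_coe.mp hy)
      obtain ⟨h, rfl⟩ := hyC
      exact hnorm.conj_mem _ hτA h
    have hWA : ((S ⊓ A.toSubmonoid : Submonoid G) : Set G) ⊆ (A : Set G) := by
      intro y hy; exact (hmemW.mp hy).2
    obtain ⟨d, hdW, hd⟩ :=
      aux13_absorber hab (S ⊓ A.toSubmonoid) hWA hfinτ.toFinset hFA habs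
    have hdS' : ∀ m ∈ Submonoid.closure Cτ, m * d ∈ S := by
      intro m hm
      have hm' : m ∈ Submonoid.closure ((hfinτ.toFinset : Finset G) : Set G) := by
        rwa [Set.Finite.coe_toFinset]
      exact (hmemW.mp (hd m hm')).1
    have hτS : τ ∈ S := aux13_main hquot hmax hCcτ hdS' τ ⟨1, by simp⟩
    exact hmemW.mpr ⟨hτS, hτA⟩
end

section
/- Let A be an abelian normal subgroup of finite index in a group G. Suppose B is a submonoid of A with A = BB⁻¹ such that B is a finitely generated maximal order. Let S be a submonoid of G with G = SS⁻¹ and S ∩ A = B. Then S is a maximal order satisfying the ascending chain condition on right ideals if and only if S is maximal among all submonoids T of G with T ∩ A = B. -/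
open scoped Pointwise

universe u v

section AuxStatement17

variable {G : Type u} [Group G]

/-- `S` meets every coset of a normal finite-index subgroup. -/
private lemma aux17_exists_smem_coset (A : Subgroup G) [A.Normal] [A.FiniteIndex]
    (S : Submonoid G) (hSquot : IsGroupOfQuotients S) (g : G) :
    ∃ s ∈ S, g⁻¹ * s ∈ A := by
  obtain ⟨s, hs, t, ht, rfl⟩ := hSquot g
  refine ⟨s * t ^ (A.index - 1), S.mul_mem hs (S.pow_mem ht _), ?_⟩
  have hk : A.index - 1 + 1 = A.index :=
    Nat.succ_pred_eq_of_pos (Nat.pos_of_ne_zero Subgroup.FiniteIndex.index_ne_zero)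
  have h1 : (s * t⁻¹)⁻¹ * (s * t ^ (A.index - 1)) = t ^ (A.index - 1 + 1) := by
    rw [pow_succ', mul_inv_rev, inv_inv]
    rw [mul_assoc, inv_mul_cancel_left]
  rw [h1, hk]
  exact A.pow_index_mem t

/-- products of elements of `B` belong to `B`. -/
private lemma aux17_list_prod_mem (B : Submonoid G) {l : List G}
    (hl : ∀ y ∈ l, y ∈ B) : l.prod ∈ B := by
  induction l with
  | nil => simpa using B.one_mem
  | cons a l ih =>
    rw [List.prod_cons]
    exact B.mul_mem (hl a List.mem_cons_self)
      (ih fun y hy => hl y (List.mem_cons_of_mem a hy))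

/-- dividing a product of elements of `B` by one of its factors stays in `B`,
when all elements of `B` commute. -/
private lemma aux17_inv_mul_prod_mem (A : Subgroup G)
    (hab : ∀ x ∈ A, ∀ y ∈ A, x * y = y * x)
    (B : Submonoid G) (hBA : (B : Set G) ⊆ (A : Set G)) :
    ∀ l : List G, (∀ y ∈ l, y ∈ B) → ∀ c ∈ l, c⁻¹ * l.prod ∈ B := by
  intro l
  induction l with
  | nil => intro _ c hc; exact absurd hc List.not_mem_nil
  | cons a l ih =>
    intro hmem c hc
    have haB : a ∈ B := hmem a List.mem_cons_self
    have hlB : ∀ y ∈ l, y ∈ B := fun y hy => hmem y (List.mem_cons_of_mem a hy)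
    rcases List.mem_cons.mp hc with rfl | hc
    · rw [List.prod_cons, inv_mul_cancel_left]
      exact aux17_list_prod_mem B hlB
    · have hcomm : c⁻¹ * a = a * c⁻¹ := by
        have hcA : c⁻¹ ∈ A := A.inv_mem (hBA (hlB c hc))
        exact hab _ hcA _ (hBA haB)
      rw [List.prod_cons, ← mul_assoc, hcomm, mul_assoc]
      exact B.mul_mem haB (ih hlB c hc)

/-- stabilization of increasing chains of "ideal-like" subsets of a finitely
generated submonoid `B` of an abelian normal subgroup. -/
private lemma aux17_stab (A : Subgroup G)
    (hab : ∀ x ∈ A, ∀ y ∈ A, x * y = y * x)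
    (B : Submonoid G) (hBA : (B : Set G) ⊆ (A : Set G)) (hBfg : B.FG)
    (X : ℕ → Set G) (hmono : ∀ i j, i ≤ j → X i ⊆ X j)
    (hXB : ∀ n, X n ⊆ (B : Set G))
    (hXI : ∀ n, ∀ x ∈ X n, ∀ b ∈ B, x * b ∈ X n) :
    ∃ N, ∀ n, N ≤ n → X n = X N := by
  classical
  by_contra hcon
  push_neg at hcon
  obtain ⟨F, hF⟩ := hBfg
  have hFB : ∀ x : { y // y ∈ F }, (x : G) ∈ B := fun x =>
    hF ▸ Submonoid.subset_closure x.2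
  -- the exponent-product map
  set lst : List { y // y ∈ F } := F.attach.toList with hlst
  set π : ({ y // y ∈ F } → ℕ) → G :=
    fun m => (lst.map fun i => (i.1 : G) ^ m i).prod with hπ
  have hπB : ∀ (l : List { y // y ∈ F }) (m : { y // y ∈ F } → ℕ),
      (l.map fun i => (i.1 : G) ^ m i).prod ∈ B := by
    intro l m
    refine aux17_list_prod_mem B ?_
    intro y hy
    obtain ⟨i, _, rfl⟩ := List.mem_map.mp hy
    exact B.pow_mem (hFB i) _
  -- additivity of π
  have hπadd : ∀ (l : List { y // y ∈ F }) (m m' : { y // y ∈ F } → ℕ),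
      (l.map fun i => (i.1 : G) ^ (m i + m' i)).prod =
        (l.map fun i => (i.1 : G) ^ m i).prod * (l.map fun i => (i.1 : G) ^ m' i).prod := by
    intro l
    induction l with
    | nil => intro m m'; simp
    | cons a l ih =>
      intro m m'
      have hcomm : Commute ((a : G) ^ m' a) (l.map fun i => (i.1 : G) ^ m i).prod := by
        have h1 : ((a : G) ^ m' a) ∈ A := hBA (B.pow_mem (hFB a) _)
        have h2 : (l.map fun i => (i.1 : G) ^ m i).prod ∈ A := hBA (hπB l m)
        exact hab _ h1 _ h2
      simp only [List.map_cons, List.prod_cons]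
      rw [ih m m', pow_add]
      exact hcomm.mul_mul_mul_comm _ _
  -- products supported at a single index
  have hπsingle : ∀ (l : List { y // y ∈ F }) (h : { y // y ∈ F } → G)
      (i₀ : { y // y ∈ F }), l.Nodup → i₀ ∈ l → (∀ i, i ≠ i₀ → h i = 1) →
      (l.map h).prod = h i₀ := by
    intro l
    induction l with
    | nil => intro h i₀ _ hmem _; exact absurd hmem List.not_mem_nil
    | cons a l ih =>
      intro h i₀ hnd hmem hone
      have hnd' := List.nodup_cons.mp hnd
      rcases List.mem_cons.mp hmem with rfl | hmem'
      · rw [List.map_cons, List.prod_cons]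
        have : (l.map h).prod = 1 := by
          refine List.prod_eq_one ?_
          intro x hx
          obtain ⟨i, hi, rfl⟩ := List.mem_map.mp hx
          exact hone i (fun he => hnd'.1 (he ▸ hi))
        rw [this, mul_one]
      · have hne : a ≠ i₀ := fun he => hnd'.1 (he ▸ hmem')
        rw [List.map_cons, List.prod_cons, hone a hne, one_mul]
        exact ih h i₀ hnd'.2 hmem' hone
  -- surjectivity of π onto B
  have hπsurj : ∀ b ∈ B, ∃ m, π m = b := by
    have key : ∀ l : List G, (∀ y ∈ l, y ∈ (F : Set G)) → ∃ m, π m = l.prod := by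
      intro l
      induction l with
      | nil =>
        intro _
        refine ⟨0, ?_⟩
        simp only [hπ, Pi.zero_apply, pow_zero, List.prod_nil]
        exact List.prod_eq_one (by
          intro x hx
          obtain ⟨i, _, rfl⟩ := List.mem_map.mp hx
          rfl)
      | cons y l ih =>
        intro hmem
        have hy : y ∈ F := hmem y List.mem_cons_self
        obtain ⟨m, hm⟩ := ih (fun z hz => hmem z (List.mem_cons_of_mem y hz))
        refine ⟨Pi.single ⟨y, hy⟩ 1 + m, ?_⟩
        have h1 : π (Pi.single ⟨y, hy⟩ 1 + m) =
            π (Pi.single ⟨y, hy⟩ 1) * π m := by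
          simp only [hπ, Pi.add_apply]
          exact hπadd lst _ m
        have h2 : π (Pi.single ⟨y, hy⟩ 1) = y := by
          have := hπsingle lst (fun i => (i.1 : G) ^ (Pi.single ⟨y, hy⟩ 1 : _ → ℕ) i)
            ⟨y, hy⟩ (Finset.nodup_toList _)
            (Finset.mem_toList.mpr (F.mem_attach _))
            (fun i hi => by simp [Pi.single_eq_of_ne hi])
          simp only [hπ]
          rw [this]
          simp
        rw [h1, h2, hm, List.prod_cons]
    intro b hb
    rw [← hF] at hb
    obtain ⟨l, hl, hlp⟩ := Submonoid.exists_list_of_mem_closure hb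
    obtain ⟨m, hm⟩ := key l hl
    exact ⟨m, hm.trans hlp⟩
  -- division
  have hdvd : ∀ m m' : { y // y ∈ F } → ℕ, (∀ i, m i ≤ m' i) →
      ∃ b ∈ B, π m' = π m * b := by
    intro m m' h
    refine ⟨π (fun i => m' i - m i), hπB lst _, ?_⟩
    have h1 : (fun i => m i + (m' i - m i)) = m' := by
      funext i
      have := h i
      omega
    calc π m' = π (fun i => m i + (m' i - m i)) := by rw [h1]
      _ = π m * π (fun i => m' i - m i) := hπadd lst m _
  -- build a strictly increasing failure sequence
  have hstep : ∀ N : ℕ, ∃ n, N ≤ n ∧ X n ≠ X N := hcon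
  set step : ℕ → ℕ := fun N => (hstep N).choose with hstepdef
  have hstep1 : ∀ N, N ≤ step N := fun N => (hstep N).choose_spec.1
  have hstep2 : ∀ N, X (step N) ≠ X N := fun N => (hstep N).choose_spec.2
  set g : ℕ → ℕ := fun k => step^[k] 0 with hg
  have hgsucc : ∀ k, g (k + 1) = step (g k) := fun k =>
    Function.iterate_succ_apply' step k 0
  have hglt : ∀ k, g k < g (k + 1) := by
    intro k
    rw [hgsucc k]
    rcases lt_or_eq_of_le (hstep1 (g k)) with h | h
    · exact h
    · exact absurd (by rw [← h] : X (step (g k)) = X (g k)) (hstep2 (g k))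
  have hgmono : StrictMono g := strictMono_nat_of_lt_succ hglt
  have hx : ∀ k, ∃ x, x ∈ X (g (k + 1)) ∧ x ∉ X (g k) := by
    intro k
    by_contra hno
    push_neg at hno
    exact hstep2 (g k) (by
      rw [← hgsucc k]
      exact Set.Subset.antisymm hno (hmono _ _ (le_of_lt (hglt k))))
  set x : ℕ → G := fun k => (hx k).choose with hxdef
  have hx1 : ∀ k, x k ∈ X (g (k + 1)) := fun k => (hx k).choose_spec.1
  have hx2 : ∀ k, x k ∉ X (g k) := fun k => (hx k).choose_spec.2
  have hxB : ∀ k, x k ∈ B := fun k => hXB _ (hx1 k)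
  set m : ℕ → ({ y // y ∈ F } → ℕ) := fun k => (hπsurj _ (hxB k)).choose with hmdef
  have hm : ∀ k, π (m k) = x k := fun k => (hπsurj _ (hxB k)).choose_spec
  have hPWO : (Set.univ : Set ({ y // y ∈ F } → ℕ)).IsPWO :=
    by
      have := Set.IsPWO.pi (ι := { y // y ∈ F }) (α := fun _ => ℕ) (s := fun _ => Set.univ)
        (fun _ => Set.isPWO_univ_iff.mpr inferInstance)
      rwa [Set.pi_univ] at this
  obtain ⟨i, j, hij, hle⟩ := Set.PartiallyWellOrderedOn.exists_lt hPWO (f := m) (fun n => Set.mem_univ _)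
  obtain ⟨b, hbB, hb⟩ := hdvd (m i) (m j) (fun t => hle t)
  have hxj : x j ∈ X (g j) := by
    have h1 : x j = x i * b := by rw [← hm j, hb, hm i]
    have h2 : x i * b ∈ X (g (i + 1)) := hXI _ _ (hx1 i) b hbB
    have h3 : X (g (i + 1)) ⊆ X (g j) := hmono _ _ (hgmono.le_iff_le.mpr hij)
    rw [h1]; exact h3 h2
  exact hx2 j hxj

end AuxStatement17

/-- `S` is a maximal order satisfying the ACC on right ideals iff `S`
is maximal among the submonoids `T` of `G` with `T ∩ A = B`. -/
theorem maximalOrder_iff_maximal_among_submonoids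
    {G : Type u} [Group G]
    (A : Subgroup G) (hnorm : A.Normal)
    (hab : ∀ x ∈ A, ∀ y ∈ A, x * y = y * x)
    (hfi : A.FiniteIndex)
    (B : Submonoid G) (hBA : (B : Set G) ⊆ (A : Set G))
    (hBquot : quotSet B = (A : Set G))
    (hBfg : B.FG)
    (hBmax : IsMaximalOrderWithin B)
    (S : Submonoid G) (hSquot : IsGroupOfQuotients S)
    (hSA : S ⊓ A.toSubmonoid = B) :
    (IsMaximalOrderWithin S ∧ ACCRightIdeals S) ↔
    (∀ T : Submonoid G, S ≤ T → T ⊓ A.toSubmonoid = B → T = S) := by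
  classical
  haveI := hnorm
  haveI := hfi
  letI : Fintype (G ⧸ A) := A.fintypeQuotientOfFiniteIndex
  have hNpos : A.index - 1 + 1 = A.index :=
    Nat.succ_pred_eq_of_pos (Nat.pos_of_ne_zero Subgroup.FiniteIndex.index_ne_zero)
  set k : ℕ := A.index - 1 with hkdef
  have hBS : B ≤ S := hSA ▸ (inf_le_left : S ⊓ A.toSubmonoid ≤ S)
  have memB : ∀ x : G, x ∈ S → x ∈ A → x ∈ B := fun x h1 h2 =>
    hSA ▸ Submonoid.mem_inf.mpr ⟨h1, h2⟩
  have hquotuniv : ∀ g : G, g ∈ quotSet S := fun g => hSquot g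
  -- coset representatives inside S
  have hτex : ∀ q : G ⧸ A, ∃ s, s ∈ S ∧ (s : G ⧸ A) = q := by
    intro q
    obtain ⟨g, rfl⟩ := QuotientGroup.mk_surjective q
    obtain ⟨s, hs, hgs⟩ := aux17_exists_smem_coset A S hSquot g
    exact ⟨s, hs, (QuotientGroup.eq.mpr hgs).symm⟩
  set τ : G ⧸ A → G := fun q => (hτex q).choose with hτdef
  have hτS : ∀ q, τ q ∈ S := fun q => (hτex q).choose_spec.1
  have hτq : ∀ q, ((τ q : G) : G ⧸ A) = q := fun q => (hτex q).choose_spec.2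
  have hτA : ∀ q, (τ q) ^ A.index ∈ A := fun q => A.pow_index_mem (τ q)
  have hβB : ∀ q, (τ q) ^ A.index ∈ B := fun q =>
    memB _ (S.pow_mem (hτS q) _) (hτA q)
  -- the decomposition of elements of a submonoid `T ⊇ S` with `T ⊓ A = B`
  have hdecomp : ∀ (T : Submonoid G), S ≤ T → T ⊓ A.toSubmonoid = B →
      ∀ t ∈ T, (τ ((t : G) : G ⧸ A)) ^ k * t ∈ B := by
    intro T hST hTA t ht
    set q : G ⧸ A := ((t : G) : G ⧸ A) with hq
    have h1 : (τ q)⁻¹ * t ∈ A := QuotientGroup.eq.mp ((hτq q).trans hq)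
    have h2 : (τ q) ^ k * t = (τ q) ^ (k + 1) * ((τ q)⁻¹ * t) := by
      rw [pow_succ, mul_assoc, mul_inv_cancel_left]
    have h3 : (τ q) ^ k * t ∈ A := by
      rw [h2]
      exact A.mul_mem (hNpos ▸ hτA q) h1
    have h4 : (τ q) ^ k * t ∈ T := T.mul_mem (T.pow_mem (hST (hτS q)) _) ht
    rw [← hTA]
    exact Submonoid.mem_inf.mpr ⟨h4, h3⟩
  constructor
  · -- maximal order (with ACC) implies maximality among submonoids with T ⊓ A = B
    rintro ⟨Hmax, -⟩ T hST hTA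
    -- the common right multiplier
    set lβ : List G := ((Finset.univ : Finset (G ⧸ A)).toList.map
      fun q => (τ q) ^ A.index) with hlβ
    have hlβB : ∀ y ∈ lβ, y ∈ B := by
      intro y hy
      obtain ⟨q, _, rfl⟩ := List.mem_map.mp hy
      exact hβB q
    set x : G := lβ.prod with hxdef
    have hxA : x ∈ A := hBA (aux17_list_prod_mem B hlβB)
    have hmul : ∀ t ∈ T, t * x ∈ S := by
      intro t ht
      set q : G ⧸ A := ((t : G) : G ⧸ A) with hq
      set b' : G := (τ q) ^ k * t with hb'
      have hb'B : b' ∈ B := hdecomp T hST hTA t ht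
      set y : G := ((τ q) ^ A.index)⁻¹ * x with hy
      have hyB : y ∈ B := by
        refine aux17_inv_mul_prod_mem A hab B hBA lβ hlβB _ ?_
        rw [hlβ]
        exact List.mem_map.mpr ⟨q, Finset.mem_toList.mpr (Finset.mem_univ q), rfl⟩
      have ht' : t = ((τ q) ^ k)⁻¹ * b' := by rw [hb', inv_mul_cancel_left]
      have hx' : x = (τ q) ^ A.index * y := by rw [hy, mul_inv_cancel_left]
      have hcomm : b' * ((τ q) ^ A.index * y) = (τ q) ^ A.index * y * b' := by
        refine hab _ (hBA hb'B) _ ?_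
        exact A.mul_mem (hτA q) (hBA hyB)
      have hτk : ((τ q) ^ k)⁻¹ * ((τ q) ^ A.index) = τ q := by
        rw [← hNpos, pow_succ, inv_mul_cancel_left]
      have : t * x = τ q * (y * b') := by
        rw [ht', hx']
        calc ((τ q) ^ k)⁻¹ * b' * ((τ q) ^ A.index * y)
            = ((τ q) ^ k)⁻¹ * (b' * ((τ q) ^ A.index * y)) := by rw [mul_assoc]
          _ = ((τ q) ^ k)⁻¹ * ((τ q) ^ A.index * y * b') := by rw [hcomm]
          _ = ((τ q) ^ k)⁻¹ * ((τ q) ^ A.index) * y * b' := by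
              simp only [mul_assoc]
          _ = τ q * (y * b') := by rw [hτk]; simp only [mul_assoc]
      rw [this]
      exact S.mul_mem (hτS q) (S.mul_mem (hBS hyB) (hBS hb'B))
    refine Hmax T hST (fun t _ => hquotuniv t) ⟨1, hquotuniv 1, x, hquotuniv x, ?_⟩
    intro t ht
    rw [one_mul]
    exact hmul t ht
  · -- maximality among submonoids implies maximal order and ACC
    intro Hrhs
    constructor
    · -- maximal order
      intro T hST hTquot ⟨a, _, b, _, habS⟩
      refine Hrhs T hST ?_
      -- show T ⊓ A = B using that B is a maximal order in A
      obtain ⟨s₂, hs₂S, hs₂A⟩ := aux17_exists_smem_coset A S hSquot a⁻¹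
      obtain ⟨s₁, hs₁S, hs₁A⟩ := aux17_exists_smem_coset A S hSquot b⁻¹
      rw [inv_inv] at hs₂A hs₁A
      -- hs₂A : a * s₂ ∈ A, hs₁A : b * s₁ ∈ A
      have ha' : s₂ * a ∈ A := by
        have := hnorm.conj_mem _ hs₂A a⁻¹
        simpa [mul_assoc] using this
      set T' : Submonoid G := T ⊓ A.toSubmonoid with hT'
      have hBT' : B ≤ T' := by
        intro z hz
        exact Submonoid.mem_inf.mpr ⟨hST (hBS hz), hBA hz⟩
      have hT'sub : (T' : Set G) ⊆ quotSet B := by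
        rw [hBquot]
        intro z hz
        exact (Submonoid.mem_inf.mp hz).2
      have hmults : ∀ u ∈ T', (s₂ * a) * u * (b * s₁) ∈ B := by
        intro u hu
        obtain ⟨huT, huA⟩ := Submonoid.mem_inf.mp hu
        refine memB _ ?_ ?_
        · have h1 : a * u * b ∈ S := habS u huT
          have h2 : (s₂ * a) * u * (b * s₁) = s₂ * (a * u * b * s₁) := by
            simp [mul_assoc]
          rw [h2]
          exact S.mul_mem hs₂S (S.mul_mem h1 hs₁S)
        · exact A.mul_mem (A.mul_mem ha' huA) hs₁A
      have hT'B : T' = B := by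
        refine hBmax T' hBT' hT'sub ⟨s₂ * a, ?_, b * s₁, ?_, hmults⟩
        · rw [hBquot]; exact ha'
        · rw [hBquot]; exact hs₁A
      exact hT'B
    · -- ACC on right ideals
      intro f hid hchain
      have hmono : ∀ i j : ℕ, i ≤ j → f i ⊆ f j := by
        intro i j hij
        induction hij with
        | refl => exact Set.Subset.rfl
        | step h ih => exact Set.Subset.trans ih (hchain _)
      set Y : (G ⧸ A) → ℕ → Set G :=
        fun q n => {z : G | z ∈ (B : Set G) ∧ ((τ q) ^ k)⁻¹ * z ∈ f n} with hY
      have hYstab : ∀ q, ∃ N, ∀ n, N ≤ n → Y q n = Y q N := by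
        intro q
        refine aux17_stab A hab B hBA hBfg (Y q) ?_ ?_ ?_
        · intro i j hij z hz
          exact ⟨hz.1, hmono i j hij hz.2⟩
        · intro n z hz; exact hz.1
        · intro n z hz c hc
          refine ⟨B.mul_mem hz.1 hc, ?_⟩
          have : ((τ q) ^ k)⁻¹ * (z * c) = (((τ q) ^ k)⁻¹ * z) * c := by
            rw [mul_assoc]
          rw [this]
          exact (hid n).2.2 _ hz.2 c (hBS hc)
      have key : ∀ i j : ℕ, (∀ q, Y q i = Y q j) → f i ⊆ f j := by
        intro i j hYij s hs
        set q : G ⧸ A := ((s : G) : G ⧸ A) with hq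
        have hsS : s ∈ S := (hid i).2.1 hs
        have h1 : (τ q)⁻¹ * s ∈ A := QuotientGroup.eq.mp (hτq q)
        have h2 : (τ q) ^ k * s ∈ A := by
          have : (τ q) ^ k * s = (τ q) ^ (k + 1) * ((τ q)⁻¹ * s) := by
            rw [pow_succ, mul_assoc, mul_inv_cancel_left]
          rw [this]
          exact A.mul_mem (hNpos ▸ hτA q) h1
        have h3 : (τ q) ^ k * s ∈ B :=
          memB _ (S.mul_mem (S.pow_mem (hτS q) _) hsS) h2
        have h4 : ((τ q) ^ k)⁻¹ * ((τ q) ^ k * s) = s := inv_mul_cancel_left _ _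
        have h5 : (τ q) ^ k * s ∈ Y q i := ⟨h3, by rw [h4]; exact hs⟩
        have h6 := (hYij q) ▸ h5
        have h7 := h6.2
        rw [h4] at h7
        exact h7
      set NN : (G ⧸ A) → ℕ := fun q => (hYstab q).choose with hNN
      have hNNs : ∀ q, ∀ n, NN q ≤ n → Y q n = Y q (NN q) :=
        fun q => (hYstab q).choose_spec
      refine ⟨Finset.univ.sup NN, ?_⟩
      intro n hn
      have hq : ∀ q, Y q n = Y q (Finset.univ.sup NN) := by
        intro q
        have hqle : NN q ≤ Finset.univ.sup NN := Finset.le_sup (Finset.mem_univ q)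
        rw [hNNs q n (le_trans hqle hn), hNNs q _ hqle]
      exact Set.Subset.antisymm (key _ _ hq)
        (key _ _ (fun q => (hq q).symm))
end

section
/- The commutative monoid B with presentation ⟨a₁, a₂, a₃, a₄, a₅, a₆ | a₁a₂ = a₃a₄ = a₅a₆⟩ (as a commutative monoid) is cancellative, its group of quotients is torsion free, and B is a maximal order in its group of quotients. -/
open scoped Pointwise

universe u v

namespace Baux

abbrev Z4 := ℤ × ℤ × ℤ × ℤ

def Vv : Fin 6 → Z4 :=
  ![(1,0,0,0),(0,1,0,0),(0,0,1,0),(1,1,-1,0),(0,0,0,1),(1,1,0,-1)]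

def Pv (n : Fin 6 → ℕ) : Z4 :=
  ((n 0 : ℤ) + n 3 + n 5, (n 1 : ℤ) + n 3 + n 5, (n 2 : ℤ) - n 3, (n 4 : ℤ) - n 5)

def bv (i : Fin 6) : Multiplicative Z4 := Multiplicative.ofAdd (Vv i)

lemma bv_rel1 : bv 0 * bv 1 = bv 2 * bv 3 := by decide
lemma bv_rel2 : bv 2 * bv 3 = bv 4 * bv 5 := by decide

lemma prod_bv (n : Fin 6 → ℕ) : ∏ i, bv i ^ n i = Multiplicative.ofAdd (Pv n) := by
  rw [Fin.prod_univ_six]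
  simp [bv, Pv, ← ofAdd_add, ← ofAdd_nsmul, Prod.ext_iff,
    show Vv 0 = (1,0,0,0) from rfl, show Vv 1 = (0,1,0,0) from rfl,
    show Vv 2 = (0,0,1,0) from rfl, show Vv 3 = (1,1,-1,0) from rfl,
    show Vv 4 = (0,0,0,1) from rfl, show Vv 5 = (1,1,0,-1) from rfl]
  omega

def nf6 (n : Fin 6 → ℕ) : Fin 6 → ℕ :=
  ![n 0 + min (n 2) (n 3) + min (n 4) (n 5),
    n 1 + min (n 2) (n 3) + min (n 4) (n 5),
    n 2 - min (n 2) (n 3), n 3 - min (n 2) (n 3),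
    n 4 - min (n 4) (n 5), n 5 - min (n 4) (n 5)]

theorem prod_nf {N : Type*} [CommMonoid N] (b : Fin 6 → N)
    (h1 : b 0 * b 1 = b 2 * b 3) (h2 : b 2 * b 3 = b 4 * b 5)
    (n : Fin 6 → ℕ) : ∏ i, b i ^ n i = ∏ i, b i ^ nf6 n i := by
  set k := min (n 2) (n 3) with hk
  set l := min (n 4) (n 5) with hl
  have h23 : b 2 ^ k * b 3 ^ k = b 0 ^ k * b 1 ^ k := by
    rw [← mul_pow, ← mul_pow, ← h1]
  have h45 : b 4 ^ l * b 5 ^ l = b 0 ^ l * b 1 ^ l := by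
    rw [← mul_pow, ← mul_pow, ← h1.trans h2]
  rw [Fin.prod_univ_six, Fin.prod_univ_six]
  simp only [nf6, Matrix.cons_val_zero, Matrix.cons_val_one, Matrix.head_cons,
    Matrix.cons_val_two, Matrix.tail_cons, Matrix.cons_val_three,
    Matrix.cons_val_four, Matrix.cons_val_succ]
  calc b 0 ^ n 0 * b 1 ^ n 1 * b 2 ^ n 2 * b 3 ^ n 3 * b 4 ^ n 4 * b 5 ^ n 5
      = (b 0 ^ n 0 * b 1 ^ n 1 * b 2 ^ (n 2 - k) * b 3 ^ (n 3 - k)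
          * b 4 ^ (n 4 - l) * b 5 ^ (n 5 - l)) * ((b 2 ^ k * b 3 ^ k) * (b 4 ^ l * b 5 ^ l)) := by
        rw [show n 2 = n 2 - k + k by omega, show n 3 = n 3 - k + k by omega,
          show n 4 = n 4 - l + l by omega, show n 5 = n 5 - l + l by omega]
        simp only [pow_add, Nat.add_sub_cancel]
        ac_rfl
    _ = _ := by
        rw [h23, h45]
        rw [show n 0 + k + l = n 0 + (k + l) by omega, show n 1 + k + l = n 1 + (k + l) by omega]
        simp only [pow_add]
        ac_rfl

theorem nf6_congr (n m : Fin 6 → ℕ) (h : Pv n = Pv m) : nf6 n = nf6 m := by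
  simp only [Pv, Prod.mk.injEq] at h
  simp only [nf6, Matrix.vecCons, Fin.cons_inj]
  and_intros
  · show n 0 + min (n 2) (n 3) + min (n 4) (n 5) = m 0 + min (m 2) (m 3) + min (m 4) (m 5); omega
  · show n 1 + min (n 2) (n 3) + min (n 4) (n 5) = m 1 + min (m 2) (m 3) + min (m 4) (m 5); omega
  · show n 2 - min (n 2) (n 3) = m 2 - min (m 2) (m 3); omega
  · show n 3 - min (n 2) (n 3) = m 3 - min (m 2) (m 3); omega
  · show n 4 - min (n 4) (n 5) = m 4 - min (m 4) (m 5); omega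
  · show n 5 - min (n 4) (n 5) = m 5 - min (m 4) (m 5); omega
  · trivial

theorem arch_key (c x : ℤ) (h : ∀ n : ℕ, 0 ≤ c + n * x) : 0 ≤ x := by
  by_contra hx
  push_neg at hx
  have h1 := h (c.toNat + 1)
  have h2 : c ≤ (c.toNat : ℤ) := Int.self_le_toNat c
  push_cast at h1
  have h3 : ((c.toNat : ℤ) + 1) * x ≤ ((c.toNat : ℤ) + 1) * (-1) := by
    apply mul_le_mul_of_nonneg_left (by omega) (by positivity)
  omega

theorem normality (X Y Z W : ℤ) (h1 : 0 ≤ X) (h2 : 0 ≤ Y) (h3 : 0 ≤ X + Z) (h4 : 0 ≤ Y + Z)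
    (h5 : 0 ≤ X + W) (h6 : 0 ≤ Y + W) (h7 : 0 ≤ X + Z + W) (h8 : 0 ≤ Y + Z + W) :
    ∃ k : Fin 6 → ℕ, Pv k = (X, Y, Z, W) := by
  set q : Fin 6 → ℕ := ![(X - (-Z).toNat - (-W).toNat).toNat, (Y - (-Z).toNat - (-W).toNat).toNat,
    Z.toNat, (-Z).toNat, W.toNat, (-W).toNat] with hq
  refine ⟨q, ?_⟩
  have e0 : q 0 = (X - (-Z).toNat - (-W).toNat).toNat := rfl
  have e1 : q 1 = (Y - (-Z).toNat - (-W).toNat).toNat := rfl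
  have e2 : q 2 = Z.toNat := rfl
  have e3 : q 3 = (-Z).toNat := rfl
  have e4 : q 4 = W.toNat := rfl
  have e5 : q 5 = (-W).toNat := rfl
  rw [Pv, e0, e1, e2, e3, e4, e5, Prod.mk.injEq, Prod.mk.injEq, Prod.mk.injEq]
  refine ⟨by omega, by omega, by omega, by omega⟩

theorem arch_good (A B C D E F : Z4)
    (h : ∀ n : ℕ, ∃ k : Fin 6 → ℕ, A + n • B + C = Pv k + (D + n • E + F)) :
    ∃ k : Fin 6 → ℕ, Pv k = B - E := by
  obtain ⟨A1, A2, A3, A4⟩ := A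
  obtain ⟨B1, B2, B3, B4⟩ := B
  obtain ⟨C1, C2, C3, C4⟩ := C
  obtain ⟨D1, D2, D3, D4⟩ := D
  obtain ⟨E1, E2, E3, E4⟩ := E
  obtain ⟨F1, F2, F3, F4⟩ := F
  have H : ∀ n : ℕ,
      (0 ≤ (A1 + C1 - D1 - F1) + n * (B1 - E1)) ∧
      (0 ≤ (A2 + C2 - D2 - F2) + n * (B2 - E2)) ∧
      (0 ≤ (A1 + C1 - D1 - F1 + (A3 + C3 - D3 - F3)) + n * (B1 - E1 + (B3 - E3))) ∧
      (0 ≤ (A2 + C2 - D2 - F2 + (A3 + C3 - D3 - F3)) + n * (B2 - E2 + (B3 - E3))) ∧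
      (0 ≤ (A1 + C1 - D1 - F1 + (A4 + C4 - D4 - F4)) + n * (B1 - E1 + (B4 - E4))) ∧
      (0 ≤ (A2 + C2 - D2 - F2 + (A4 + C4 - D4 - F4)) + n * (B2 - E2 + (B4 - E4))) ∧
      (0 ≤ (A1 + C1 - D1 - F1 + (A3 + C3 - D3 - F3) + (A4 + C4 - D4 - F4))
            + n * (B1 - E1 + (B3 - E3) + (B4 - E4))) ∧
      (0 ≤ (A2 + C2 - D2 - F2 + (A3 + C3 - D3 - F3) + (A4 + C4 - D4 - F4))
            + n * (B2 - E2 + (B3 - E3) + (B4 - E4))) := by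
    intro n
    obtain ⟨k, hk⟩ := h n
    simp only [Pv, Prod.mk_add_mk, Prod.smul_mk, nsmul_eq_mul, Prod.mk.injEq] at hk
    obtain ⟨q1, q2, q3, q4⟩ := hk
    have n0 : (0:ℤ) ≤ k 0 := Int.natCast_nonneg _
    have n1 : (0:ℤ) ≤ k 1 := Int.natCast_nonneg _
    have n2 : (0:ℤ) ≤ k 2 := Int.natCast_nonneg _
    have n3 : (0:ℤ) ≤ k 3 := Int.natCast_nonneg _
    have n4 : (0:ℤ) ≤ k 4 := Int.natCast_nonneg _
    have n5 : (0:ℤ) ≤ k 5 := Int.natCast_nonneg _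
    refine ⟨by linarith, by linarith, by linarith, by linarith,
      by linarith, by linarith, by linarith, by linarith⟩
  have i1 : 0 ≤ B1 - E1 := arch_key _ _ fun n => (H n).1
  have i2 : 0 ≤ B2 - E2 := arch_key _ _ fun n => (H n).2.1
  have i3 : 0 ≤ B1 - E1 + (B3 - E3) := arch_key _ _ fun n => (H n).2.2.1
  have i4 : 0 ≤ B2 - E2 + (B3 - E3) := arch_key _ _ fun n => (H n).2.2.2.1
  have i5 : 0 ≤ B1 - E1 + (B4 - E4) := arch_key _ _ fun n => (H n).2.2.2.2.1
  have i6 : 0 ≤ B2 - E2 + (B4 - E4) := arch_key _ _ fun n => (H n).2.2.2.2.2.1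
  have i7 : 0 ≤ B1 - E1 + (B3 - E3) + (B4 - E4) := arch_key _ _ fun n => (H n).2.2.2.2.2.2.1
  have i8 : 0 ≤ B2 - E2 + (B3 - E3) + (B4 - E4) := arch_key _ _ fun n => (H n).2.2.2.2.2.2.2
  obtain ⟨k, hk⟩ := normality (B1 - E1) (B2 - E2) (B3 - E3) (B4 - E4) i1 i2 i3 i4 i5 i6 i7 i8
  exact ⟨k, hk⟩

theorem exists_rep {M : Type} [CommMonoid M] (a : Fin 6 → M)
    (hgen : Submonoid.closure (Set.range a) = ⊤) (x : M) :
    ∃ n : Fin 6 → ℕ, x = ∏ i, a i ^ n i := by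
  have hx : x ∈ Submonoid.closure (Set.range a) := by rw [hgen]; trivial
  induction hx using Submonoid.closure_induction with
  | mem y hy =>
      obtain ⟨i, rfl⟩ := hy
      exact ⟨Pi.single i 1, by simp [Pi.single_apply, pow_ite]⟩
  | one => exact ⟨0, by simp⟩
  | mul y z _ _ hy hz =>
      obtain ⟨n, rfl⟩ := hy
      obtain ⟨m, rfl⟩ := hz
      exact ⟨n + m, by simp [pow_add, Finset.prod_mul_distrib]⟩

end Baux

/-- the commutative monoid `⟨a₁,…,a₆ ∣ a₁a₂ = a₃a₄ = a₅a₆⟩` is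
cancellative, its group of quotients is torsion free, and it is a maximal order
in its group of quotients. -/
theorem Bmonoid_cancellative_torsionfree_maximalOrder
    (M : Type) [CommMonoid M] (a : Fin 6 → M)
    (hrel₁ : a 0 * a 1 = a 2 * a 3)
    (hrel₂ : a 2 * a 3 = a 4 * a 5)
    (hgen : Submonoid.closure (Set.range a) = ⊤)
    (huniv : ∀ (N : Type) [CommMonoid N] (b : Fin 6 → N),
      b 0 * b 1 = b 2 * b 3 → b 2 * b 3 = b 4 * b 5 →
      ∃! f : M →* N, ∀ i, f (a i) = b i) :
    (∀ x y z : M, x * z = y * z → x = y) ∧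
    Nonempty (GroupOfQuotientsRealization M) ∧
    ∀ (A : Type) [CommGroup A] (ι : M →* A), Function.Injective ι →
      IsGroupOfQuotients (MonoidHom.mrange ι) →
      ((∀ g : A, ∀ n : ℕ, 0 < n → g ^ n = 1 → g = 1) ∧
       IsMaximalOrderWithin (MonoidHom.mrange ι)) := by
  classical
  obtain ⟨φ, hφ, -⟩ := huniv (Multiplicative Baux.Z4) Baux.bv Baux.bv_rel1 Baux.bv_rel2
  have hφprod : ∀ n : Fin 6 → ℕ, φ (∏ i, a i ^ n i) = Multiplicative.ofAdd (Baux.Pv n) := by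
    intro n
    rw [map_prod]
    simp only [map_pow, hφ]
    exact Baux.prod_bv n
  have hrep := Baux.exists_rep a hgen
  have hinj : Function.Injective φ := by
    intro x y hxy
    obtain ⟨n, rfl⟩ := hrep x
    obtain ⟨m, rfl⟩ := hrep y
    rw [hφprod, hφprod] at hxy
    have hPv : Baux.Pv n = Baux.Pv m := Multiplicative.ofAdd.injective hxy
    rw [Baux.prod_nf a hrel₁ hrel₂ n, Baux.prod_nf a hrel₁ hrel₂ m, Baux.nf6_congr n m hPv]
  have hvec : ∀ x : M, ∃ n : Fin 6 → ℕ, φ x = Multiplicative.ofAdd (Baux.Pv n) := by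
    intro x; obtain ⟨n, rfl⟩ := hrep x; exact ⟨n, hφprod n⟩
  refine ⟨?_, ?_, ?_⟩
  · intro x y z h
    apply hinj
    have h2 : φ x * φ z = φ y * φ z := by rw [← map_mul, ← map_mul, h]
    exact mul_right_cancel h2
  · refine ⟨{ carrier := Multiplicative Baux.Z4, emb := φ, inj := hinj, quot := ?_ }⟩
    intro g
    set p := Multiplicative.toAdd g with hp
    set nn : Fin 6 → ℕ := ![(p.1 + (-p.1).toNat).toNat, (p.2.1 + (-p.2.1).toNat).toNat,
      (p.2.2.1 + (-p.2.2.1).toNat).toNat, 0, (p.2.2.2 + (-p.2.2.2).toNat).toNat, 0] with hnn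
    set mm : Fin 6 → ℕ := ![(-p.1).toNat, (-p.2.1).toNat, (-p.2.2.1).toNat, 0,
      (-p.2.2.2).toNat, 0] with hmm
    refine ⟨∏ i, a i ^ nn i, ∏ i, a i ^ mm i, ?_⟩
    rw [hφprod, hφprod]
    have hPv : Baux.Pv nn - Baux.Pv mm = p := by
      have e0 : nn 0 = (p.1 + (-p.1).toNat).toNat := rfl
      have e1 : nn 1 = (p.2.1 + (-p.2.1).toNat).toNat := rfl
      have e2 : nn 2 = (p.2.2.1 + (-p.2.2.1).toNat).toNat := rfl
      have e3 : nn 3 = 0 := rfl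
      have e4 : nn 4 = (p.2.2.2 + (-p.2.2.2).toNat).toNat := rfl
      have e5 : nn 5 = 0 := rfl
      have f0 : mm 0 = (-p.1).toNat := rfl
      have f1 : mm 1 = (-p.2.1).toNat := rfl
      have f2 : mm 2 = (-p.2.2.1).toNat := rfl
      have f3 : mm 3 = 0 := rfl
      have f4 : mm 4 = (-p.2.2.2).toNat := rfl
      have f5 : mm 5 = 0 := rfl
      rw [Prod.ext_iff, Prod.ext_iff, Prod.ext_iff]
      refine ⟨?_, ?_, ?_, ?_⟩ <;>
        simp only [Baux.Pv, Prod.fst_sub, Prod.snd_sub, e0, e1, e2, e3, e4, e5,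
          f0, f1, f2, f3, f4, f5] <;> omega
    calc g = Multiplicative.ofAdd p := (ofAdd_toAdd g).symm
      _ = Multiplicative.ofAdd (Baux.Pv nn - Baux.Pv mm) := by rw [hPv]
      _ = Multiplicative.ofAdd (Baux.Pv nn) * (Multiplicative.ofAdd (Baux.Pv mm))⁻¹ := by
          rw [ofAdd_sub, div_eq_mul_inv]
  · intro A _ ι hι hquot
    constructor
    · intro g n hn hg
      obtain ⟨sg, hsg, tg, htg, rfl⟩ := hquot g
      obtain ⟨s', rfl⟩ := MonoidHom.mem_mrange.mp hsg
      obtain ⟨t', rfl⟩ := MonoidHom.mem_mrange.mp htg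
      have h2 : (ι s') ^ n * ((ι t') ^ n)⁻¹ = 1 := by
        rw [← inv_pow, ← mul_pow]; exact hg
      have h1 : ι (s' ^ n) = ι (t' ^ n) := by
        rw [map_pow, map_pow]; exact mul_inv_eq_one.mp h2
      have h3 : s' ^ n = t' ^ n := hι h1
      obtain ⟨ns, hns⟩ := hvec s'
      obtain ⟨nt, hnt⟩ := hvec t'
      have h4 : φ s' ^ n = φ t' ^ n := by rw [← map_pow, ← map_pow, h3]
      rw [hns, hnt, ← ofAdd_nsmul, ← ofAdd_nsmul] at h4
      have h5 : n • Baux.Pv ns = n • Baux.Pv nt := Multiplicative.ofAdd.injective h4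
      have c1 := congrArg (fun q : Baux.Z4 => q.1) h5
      have c2 := congrArg (fun q : Baux.Z4 => q.2.1) h5
      have c3 := congrArg (fun q : Baux.Z4 => q.2.2.1) h5
      have c4 := congrArg (fun q : Baux.Z4 => q.2.2.2) h5
      simp only [Prod.smul_fst, Prod.smul_snd, smul_eq_mul, nsmul_eq_mul] at c1 c2 c3 c4
      have hn' : ((n : ℤ)) ≠ 0 := by exact_mod_cast hn.ne'
      have h6 : Baux.Pv ns = Baux.Pv nt := by
        rw [Prod.ext_iff, Prod.ext_iff, Prod.ext_iff]
        exact ⟨mul_left_cancel₀ hn' c1, mul_left_cancel₀ hn' c2,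
          mul_left_cancel₀ hn' c3, mul_left_cancel₀ hn' c4⟩
      have h7 : s' = t' := hinj (by rw [hns, hnt, h6])
      rw [h7]
      exact mul_inv_eq_one.mpr rfl
    · rintro T hST hTq ⟨aq, haq, bq, hbq, habs⟩
      refine le_antisymm ?_ hST
      intro g hg
      simp only [quotSet, Set.mem_setOf_eq, MonoidHom.mem_mrange] at haq hbq
      obtain ⟨sa, ⟨a1, rfl⟩, ta, ⟨a2, rfl⟩, rfl⟩ := haq
      obtain ⟨sb, ⟨b1, rfl⟩, tb, ⟨b2, rfl⟩, rfl⟩ := hbq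
      obtain ⟨sg, hsg, tg, htg, rfl⟩ := hquot g
      obtain ⟨s, rfl⟩ := MonoidHom.mem_mrange.mp hsg
      obtain ⟨u, rfl⟩ := MonoidHom.mem_mrange.mp htg
      obtain ⟨na1, ha1v⟩ := hvec a1
      obtain ⟨na2, ha2v⟩ := hvec a2
      obtain ⟨nb1, hb1v⟩ := hvec b1
      obtain ⟨nb2, hb2v⟩ := hvec b2
      obtain ⟨ns, hsv⟩ := hvec s
      obtain ⟨nu, huv⟩ := hvec u
      have key : ∀ n : ℕ, ∃ k : Fin 6 → ℕ,
          Baux.Pv na1 + n • Baux.Pv ns + Baux.Pv nb1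
            = Baux.Pv k + (Baux.Pv na2 + n • Baux.Pv nu + Baux.Pv nb2) := by
        intro n
        have hgn : (ι s * (ι u)⁻¹) ^ n ∈ T := pow_mem hg n
        obtain ⟨m, hm⟩ := MonoidHom.mem_mrange.mp (habs _ hgn)
        obtain ⟨km, hkm⟩ := hvec m
        refine ⟨km, ?_⟩
        have hM : a1 * s ^ n * b1 = m * (a2 * u ^ n * b2) := by
          apply hι
          calc ι (a1 * s ^ n * b1)
              = (ι a1 * (ι a2)⁻¹ * ι a2) * ((ι s * (ι u)⁻¹) * ι u) ^ n
                  * (ι b1 * (ι b2)⁻¹ * ι b2) := by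
                rw [inv_mul_cancel_right, inv_mul_cancel_right, inv_mul_cancel_right]
                simp [map_mul, map_pow]
            _ = (ι a1 * (ι a2)⁻¹ * (ι s * (ι u)⁻¹) ^ n * (ι b1 * (ι b2)⁻¹))
                  * (ι a2 * (ι u) ^ n * ι b2) := by
                rw [mul_pow]; ac_rfl
            _ = ι m * (ι a2 * (ι u) ^ n * ι b2) := by rw [← hm]
            _ = ι (m * (a2 * u ^ n * b2)) := by simp [map_mul, map_pow]
        have hphi := congrArg φ hM
        simp only [map_mul, map_pow, ha1v, ha2v, hb1v, hb2v, hsv, huv, hkm,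
          ← ofAdd_nsmul, ← ofAdd_add] at hphi
        have hadd := Multiplicative.ofAdd.injective hphi
        abel_nf at hadd ⊢
        exact hadd
      obtain ⟨k, hk⟩ := Baux.arch_good _ _ _ _ _ _ key
      have hφw : φ (∏ i, a i ^ k i) = Multiplicative.ofAdd (Baux.Pv k) := hφprod k
      have hsu : s = u * ∏ i, a i ^ k i := by
        apply hinj
        rw [map_mul, hsv, huv, hφw, ← ofAdd_add]
        congr 1
        rw [hk]; abel
      refine ⟨∏ i, a i ^ k i, ?_⟩
      rw [hsu, map_mul, mul_comm (ι u) (ι (∏ i, a i ^ k i)), mul_inv_cancel_right]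
end
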